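/- arXiv:1109.6492 — 7 statements merged into one kernel-verified Lean document; each statement's English description precedes it below -/
import Mathlib

section
/- Let M be a point measure on C_0 (the space of nonnegative, nonzero continuous functions on a compact metric space T) such that for every ε > 0 the set of atoms f of M with ‖f‖ > ε is finite. Then the pointwise supremum map max(M) : T → [0,∞), defined by max(M)(t) = max{f(t) : f an atom of M} (with max(M) ≡ 0 if M = 0), is a continuous function on T. -/
open MeasureTheory Set ENNReal

noncomputable section

/-- The set of atoms of a point measure. -/
def atomsOf {α : Type*} [MeasurableSpace α] (M : Measure α) : Set α := {f | M {f} ≠ 0}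

/-- Pointwise maximum function `max(M)(t) = max {f t : f atom of M}`. -/
def maxM {T : Type*} [TopologicalSpace T] [MeasurableSpace C(T, ℝ)]
    (M : Measure C(T, ℝ)) (t : T) : ℝ :=
  sSup ((fun f : C(T, ℝ) => f t) '' atomsOf M)

/-- `M` belongs to `M_p(C_0)`: a point measure on nonnegative nonzero continuous
functions, with finitely many atoms (with multiplicity) of norm `> ε` for every `ε > 0`. -/
def IsMp {T : Type*} [MetricSpace T] [CompactSpace T] [MeasurableSpace C(T, ℝ)]
    (M : Measure C(T, ℝ)) : Prop :=
  ∃ (c : ℕ → ℕ) (φ : ℕ → C(T, ℝ)),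
    M = Measure.sum (fun n => (c n : ℝ≥0∞) • Measure.dirac (φ n)) ∧
    (∀ n, c n ≠ 0 → 0 ≤ φ n ∧ φ n ≠ 0) ∧
    (∀ ε : ℝ, 0 < ε → {n | c n ≠ 0 ∧ ε < ‖φ n‖}.Finite)

/-- `Φ` is a Poisson random measure on `α` with intensity `μ`, under `P`. -/
def IsPoissonPM {Ω : Type*} [MeasurableSpace Ω] {α : Type*} [MeasurableSpace α]
    (P : Measure Ω) (Φ : Ω → Measure α) (μ : Measure α) : Prop :=
  (∀ A : Set α, MeasurableSet A → Measurable fun ω => Φ ω A) ∧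
  (∀ A : Set α, MeasurableSet A → μ A ≠ ⊤ → ∀ n : ℕ,
      P {ω | Φ ω A = n} =
        ENNReal.ofReal (Real.exp (-(μ A).toReal) * (μ A).toReal ^ n / n.factorial)) ∧
  ∀ (m : ℕ) (A : Fin m → Set α), (∀ i, MeasurableSet (A i)) →
      Pairwise (Function.onFun Disjoint A) →
      ProbabilityTheory.iIndepFun (fun i ω => Φ ω (A i)) P

/-- `exp(-x)` for extended nonnegative `x`. -/
def Eexp (x : ℝ≥0∞) : ℝ≥0∞ :=
  if x = ⊤ then 0 else ENNReal.ofReal (Real.exp (-x.toReal))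

/-- if `M ∈ M_p(C_0)` then the pointwise supremum map
`max(M) : t ↦ max {f t : f atom of M}` is continuous on `T`. -/
theorem maxM_continuous {T : Type*} [MetricSpace T] [CompactSpace T]
    [MeasurableSpace C(T, ℝ)] [BorelSpace C(T, ℝ)]
    (M : Measure C(T, ℝ)) (hM : IsMp M) :
    Continuous (maxM M) := by
  obtain ⟨c, φ, hMeq, hpos, hfin⟩ := hM
  have hatoms : atomsOf M = φ '' {n | c n ≠ 0} := by
    ext f
    simp only [atomsOf, Set.mem_setOf_eq, Set.mem_image]
    rw [hMeq, Measure.sum_apply _ (measurableSet_singleton f), ne_eq,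
      ENNReal.tsum_eq_zero]
    push_neg
    constructor
    · rintro ⟨n, hn⟩
      rw [Measure.smul_apply, smul_eq_mul] at hn
      rcases eq_or_ne (φ n) f with h | h
      · refine ⟨n, fun hc => ?_, h⟩
        exact hn (by rw [hc, Nat.cast_zero, zero_mul])
      · rw [Measure.dirac_apply' _ (measurableSet_singleton f),
          Set.indicator_of_notMem (by simpa using h)] at hn
        simp at hn
    · rintro ⟨n, hc, hf⟩
      refine ⟨n, ?_⟩
      rw [Measure.smul_apply, smul_eq_mul,
        Measure.dirac_apply' _ (measurableSet_singleton f)]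
      simp [hf, hc]
  set A : Set ℕ := {n | c n ≠ 0} with hA
  have hval : ∀ t, maxM M t = sSup ((fun n => (φ n) t) '' A) := by
    intro t
    rw [maxM, hatoms, Set.image_image]
  have hnn : ∀ n ∈ A, ∀ t, 0 ≤ (φ n) t := fun n hn t => (hpos n hn).1 t
  have hle : ∀ (n : ℕ) (t : T), (φ n) t ≤ ‖φ n‖ := fun n t =>
    le_trans (le_abs_self _) ((φ n).norm_coe_le_norm t)
  have hbdd : ∀ t, BddAbove ((fun n => (φ n) t) '' A) := by
    intro t
    set F1 := (hfin 1 one_pos).toFinset with hF1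
    refine ⟨1 + ∑ n ∈ F1, ‖φ n‖, ?_⟩
    rintro x ⟨n, hn, rfl⟩
    have hsum : (0:ℝ) ≤ ∑ n ∈ F1, ‖φ n‖ := Finset.sum_nonneg fun _ _ => norm_nonneg _
    by_cases h1 : 1 < ‖φ n‖
    · have hmem : n ∈ F1 := by
        rw [hF1, Set.Finite.mem_toFinset]
        exact ⟨hn, h1⟩
      have h2 : ‖φ n‖ ≤ ∑ m ∈ F1, ‖φ m‖ :=
        Finset.single_le_sum (fun m _ => norm_nonneg (φ m)) hmem
      have := hle n t
      linarith
    · have := hle n t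
      have := not_lt.mp h1
      linarith
  have hnonneg : ∀ t, 0 ≤ maxM M t := by
    intro t
    rw [hval]
    exact Real.sSup_nonneg (by rintro x ⟨n, hn, rfl⟩; exact hnn n hn t)
  -- key approximation
  have key : ∀ ε : ℝ, 0 < ε → ∃ g : C(T, ℝ), ∀ t, |maxM M t - g t| ≤ ε := by
    intro ε hε
    set Fs := (hfin ε hε).toFinset with hFs
    have hFsA : ∀ n ∈ Fs, n ∈ A ∧ ε < ‖φ n‖ := by
      intro n hn
      rw [hFs, Set.Finite.mem_toFinset] at hn
      exact ⟨hn.1, hn.2⟩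
    by_cases hne : Fs.Nonempty
    · refine ⟨Fs.sup' hne φ, fun t => ?_⟩
      have hg : (Fs.sup' hne φ) t = sSup ((fun n => (φ n) t) '' (Fs : Set ℕ)) := by
        rw [ContinuousMap.sup'_apply hne φ t, Finset.sup'_eq_csSup_image]
      have hg0 : 0 ≤ (Fs.sup' hne φ) t := by
        rw [hg]
        refine Real.sSup_nonneg ?_
        rintro x ⟨n, hn, rfl⟩
        exact hnn n (hFsA n hn).1 t
      have h1 : (Fs.sup' hne φ) t ≤ maxM M t := by
        rw [hg]
        refine Real.sSup_le ?_ (hnonneg t)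
        rintro x ⟨n, hn, rfl⟩
        rw [hval]
        exact le_csSup (hbdd t) ⟨n, (hFsA n hn).1, rfl⟩
      have h2 : maxM M t ≤ (Fs.sup' hne φ) t + ε := by
        rw [hval]
        refine Real.sSup_le ?_ (by linarith)
        rintro x ⟨n, hn, rfl⟩
        by_cases hb : ε < ‖φ n‖
        · have hmem : n ∈ Fs := by
            rw [hFs, Set.Finite.mem_toFinset]
            exact ⟨hn, hb⟩
          have : (φ n) t ≤ (Fs.sup' hne φ) t := by
            rw [ContinuousMap.sup'_apply hne φ t]
            exact Finset.le_sup' (fun n => (φ n) t) hmem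
          linarith
        · have := hle n t
          have := not_lt.mp hb
          linarith
      rw [abs_sub_le_iff]
      constructor <;> linarith
    · refine ⟨0, fun t => ?_⟩
      have h2 : maxM M t ≤ ε := by
        rw [hval]
        refine Real.sSup_le ?_ hε.le
        rintro x ⟨n, hn, rfl⟩
        have hb : ¬ ε < ‖φ n‖ := fun hb => hne ⟨n, by rw [hFs, Set.Finite.mem_toFinset]; exact ⟨hn, hb⟩⟩
        have := hle n t
        have := not_lt.mp hb
        linarith
      have := hnonneg t
      simp only [ContinuousMap.zero_apply]
      rw [abs_sub_le_iff]
      constructor <;> linarith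
  rw [Metric.continuous_iff]
  intro x ε hε
  obtain ⟨g, hg⟩ := key (ε/4) (by linarith)
  obtain ⟨δ, hδ, hgd⟩ := Metric.continuous_iff.mp g.continuous x (ε/4) (by linarith)
  refine ⟨δ, hδ, fun t ht => ?_⟩
  have h1 := hg t
  have h2 := hg x
  have h3 := hgd t ht
  rw [Real.dist_eq] at h3 ⊢
  have hc1 : |maxM M t - maxM M x| ≤ |maxM M t - g t| + |g t - g x| + |g x - maxM M x| := by
    have := abs_sub_le (maxM M t) (g t) (maxM M x)
    have := abs_sub_le (g t) (g x) (maxM M x)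
    linarith
  have h2' : |g x - maxM M x| ≤ ε/4 := by rw [abs_sub_comm]; exact h2
  linarith
end
end

section
/- Let g be a continuous function on a closed set K ⊆ T. Then the set C_K^-(g) = {M ∈ M_p(C_0) : every atom f of M satisfies f(t) < g(t) for all t ∈ K} is measurable with respect to the σ-algebra on M_p(C_0) generated by the evaluation maps M ↦ M(A) for Borel sets A ⊆ C_0. -/
open MeasureTheory Set ENNReal

noncomputable section

/-- for a closed set `K ⊆ T` and a continuous function `g`, the set
`C_K^-(g) = {M ∈ M_p(C_0) : ∀ atom f of M, f <_K g}` is measurable for the σ-algebra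
on `M_p(C_0)` induced by the σ-algebra on measures generated by `M ↦ M(A)`, `A` Borel. -/
theorem measurableSet_CKminus {T : Type*} [MetricSpace T] [CompactSpace T]
    [MeasurableSpace C(T, ℝ)] [BorelSpace C(T, ℝ)]
    (K : Set T) (hK : IsClosed K) (g : C(T, ℝ)) :
    MeasurableSet {M : {M : Measure C(T, ℝ) // IsMp M} |
      ∀ f ∈ atomsOf (M : Measure C(T, ℝ)), ∀ t ∈ K, f t < g t} := by
  set A : Set C(T, ℝ) := {f | ∃ t ∈ K, g t ≤ f t} with hAdef
  -- A is closed
  have hS : IsClosed {p : T × C(T, ℝ) | p.1 ∈ K ∧ g p.1 ≤ p.2 p.1} := by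
    apply (hK.preimage continuous_fst).inter
    exact isClosed_le (g.continuous.comp continuous_fst)
      (continuous_eval.comp continuous_swap)
  have hAimg : A = Prod.snd '' {p : T × C(T, ℝ) | p.1 ∈ K ∧ g p.1 ≤ p.2 p.1} := by
    ext f
    constructor
    · rintro ⟨t, htK, hle⟩; exact ⟨(t, f), ⟨htK, hle⟩, rfl⟩
    · rintro ⟨⟨t, f'⟩, ⟨htK, hle⟩, rfl⟩; exact ⟨t, htK, hle⟩
  have hA : IsClosed A := by
    rw [hAimg]; exact isClosedMap_snd_of_compactSpace _ hS
  have hAm : MeasurableSet A := hA.measurableSet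
  -- The set equals the preimage of {M | M A = 0}
  have hset : {M : {M : Measure C(T, ℝ) // IsMp M} |
      ∀ f ∈ atomsOf (M : Measure C(T, ℝ)), ∀ t ∈ K, f t < g t}
      = (Subtype.val) ⁻¹' {M : Measure C(T, ℝ) | M A = 0} := by
    ext ⟨M, c, φ, hM, _hpos, _hfin⟩
    simp only [mem_setOf_eq, mem_preimage]
    constructor
    · intro h
      have hMA : M A = ∑' n, (c n : ℝ≥0∞) * (Measure.dirac (φ n)) A := by
        rw [hM, Measure.sum_apply _ hAm]
        simp [Measure.smul_apply]
      rw [hMA]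
      rw [ENNReal.tsum_eq_zero]
      intro n
      rcases eq_or_ne (c n) 0 with h0 | h0
      · simp [h0]
      · -- φ n is an atom of M
        have hatom : φ n ∈ atomsOf M := by
          simp only [atomsOf, mem_setOf_eq]
          intro hz
          have : (c n : ℝ≥0∞) * (Measure.dirac (φ n)) {φ n} ≤ M {φ n} := by
            rw [hM, Measure.sum_apply _ (measurableSet_singleton _)]
            exact le_trans (le_of_eq rfl) (ENNReal.le_tsum n)
          rw [hz, Measure.dirac_apply_of_mem (mem_singleton _), mul_one] at this
          exact h0 (by simpa using this)
        have hnot : φ n ∉ A := by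
          rintro ⟨t, htK, hle⟩
          exact absurd (h _ hatom t htK) (not_lt.2 hle)
        simp [Measure.dirac_apply' _ hAm, indicator_of_notMem hnot]
    · intro hMA f hf t htK
      by_contra hlt
      have hfA : f ∈ A := ⟨t, htK, not_lt.1 hlt⟩
      have : M {f} ≤ M A := measure_mono (singleton_subset_iff.2 hfA)
      rw [hMA] at this
      exact hf (le_antisymm this zero_le)
  rw [hset]
  exact measurable_subtype_coe ((Measure.measurable_coe hAm) (measurableSet_singleton 0))
end
end

section
/- The set C_K^+ = {M ∈ M_p(C_0) : every atom f of M satisfies f(t) ≥ max(M)(t) for some t ∈ K} (i.e., every atom is K-extremal) is measurable with respect to the σ-algebra M_p on M_p(C_0). -/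
open MeasureTheory Set ENNReal

noncomputable section

namespace CKplusAux

open TopologicalSpace

variable {T : Type*} [MetricSpace T] [CompactSpace T] [MeasurableSpace C(T, ℝ)]
  [BorelSpace C(T, ℝ)]

/-- Evaluation of the point measure on a measurable set. -/
lemma apply_ne_zero (c : ℕ → ℕ) (φ : ℕ → C(T, ℝ)) {A : Set C(T, ℝ)}
    (hA : MeasurableSet A) :
    (Measure.sum fun n => (c n : ℝ≥0∞) • Measure.dirac (φ n)) A ≠ 0 ↔
      ∃ n, c n ≠ 0 ∧ φ n ∈ A := by
  classical
  rw [Measure.sum_apply _ hA]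
  simp only [Measure.smul_apply, smul_eq_mul, Measure.dirac_apply' _ hA]
  rw [Ne, ENNReal.tsum_eq_zero]
  push_neg
  refine exists_congr fun n => ?_
  rw [Set.indicator_apply]
  by_cases h : φ n ∈ A <;> simp [h]

variable {M : Measure C(T, ℝ)} {c : ℕ → ℕ} {φ : ℕ → C(T, ℝ)}

lemma mem_atoms_iff
    (hrepr : M = Measure.sum fun n => (c n : ℝ≥0∞) • Measure.dirac (φ n))
    (x : C(T, ℝ)) : x ∈ atomsOf M ↔ ∃ n, c n ≠ 0 ∧ φ n = x := by
  have h1 : M {x} ≠ 0 ↔ ∃ n, c n ≠ 0 ∧ φ n ∈ ({x} : Set C(T, ℝ)) := by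
    rw [hrepr]; exact apply_ne_zero c φ (measurableSet_singleton x)
  have h2 : (∃ n, c n ≠ 0 ∧ φ n ∈ ({x} : Set C(T, ℝ))) ↔ ∃ n, c n ≠ 0 ∧ φ n = x :=
    exists_congr fun n => and_congr_right fun _ => Set.mem_singleton_iff
  exact h1.trans h2

lemma M_apply_ne_zero
    (hrepr : M = Measure.sum fun n => (c n : ℝ≥0∞) • Measure.dirac (φ n))
    {A : Set C(T, ℝ)} (hA : MeasurableSet A) :
    M A ≠ 0 ↔ ∃ f ∈ atomsOf M, f ∈ A := by
  have h1 : M A ≠ 0 ↔ ∃ n, c n ≠ 0 ∧ φ n ∈ A := by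
    rw [hrepr]; exact apply_ne_zero c φ hA
  rw [h1]
  constructor
  · rintro ⟨n, hn, hA2⟩
    exact ⟨φ n, (mem_atoms_iff hrepr _).2 ⟨n, hn, rfl⟩, hA2⟩
  · rintro ⟨f, hf, hA2⟩
    obtain ⟨n, hn, rfl⟩ := (mem_atoms_iff hrepr f).1 hf
    exact ⟨n, hn, hA2⟩

lemma atoms_nonneg
    (hrepr : M = Measure.sum fun n => (c n : ℝ≥0∞) • Measure.dirac (φ n))
    (hpos : ∀ n, c n ≠ 0 → 0 ≤ φ n ∧ φ n ≠ 0)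
    {x : C(T, ℝ)} (hx : x ∈ atomsOf M) (t : T) : 0 ≤ x t := by
  obtain ⟨n, hn, rfl⟩ := (mem_atoms_iff hrepr x).1 hx
  exact (hpos n hn).1 t

lemma finite_atoms_norm
    (hrepr : M = Measure.sum fun n => (c n : ℝ≥0∞) • Measure.dirac (φ n))
    (hfin : ∀ ε : ℝ, 0 < ε → {n | c n ≠ 0 ∧ ε < ‖φ n‖}.Finite)
    {ε : ℝ} (hε : 0 < ε) : {x ∈ atomsOf M | ε < ‖x‖}.Finite := by
  refine ((hfin ε hε).image φ).subset ?_
  rintro x ⟨hx, hx2⟩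
  obtain ⟨n, hn, rfl⟩ := (mem_atoms_iff hrepr x).1 hx
  exact ⟨n, ⟨hn, hx2⟩, rfl⟩

lemma bddAbove_eval
    (hrepr : M = Measure.sum fun n => (c n : ℝ≥0∞) • Measure.dirac (φ n))
    (hfin : ∀ ε : ℝ, 0 < ε → {n | c n ≠ 0 ∧ ε < ‖φ n‖}.Finite)
    (t : T) : BddAbove ((fun f : C(T, ℝ) => f t) '' atomsOf M) := by
  have hfin1 := finite_atoms_norm hrepr hfin (ε := 1) one_pos
  refine ⟨1 + ∑ x ∈ hfin1.toFinset, ‖x‖, ?_⟩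
  rintro y ⟨x, hx, rfl⟩
  have hxt : x t ≤ ‖x‖ := (le_abs_self _).trans (x.norm_coe_le_norm t)
  by_cases h : 1 < ‖x‖
  · have hmem : x ∈ hfin1.toFinset := by
      rw [Set.Finite.mem_toFinset]; exact ⟨hx, h⟩
    have hle : ‖x‖ ≤ ∑ z ∈ hfin1.toFinset, ‖z‖ :=
      Finset.single_le_sum (fun z _ => norm_nonneg z) hmem
    linarith
  · have hsum : (0:ℝ) ≤ ∑ z ∈ hfin1.toFinset, ‖z‖ :=
      Finset.sum_nonneg fun z _ => norm_nonneg z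
    push_neg at h
    linarith [hxt.trans h]

lemma le_maxM
    (hrepr : M = Measure.sum fun n => (c n : ℝ≥0∞) • Measure.dirac (φ n))
    (hfin : ∀ ε : ℝ, 0 < ε → {n | c n ≠ 0 ∧ ε < ‖φ n‖}.Finite)
    {x : C(T, ℝ)} (hx : x ∈ atomsOf M) (t : T) : x t ≤ maxM M t :=
  le_csSup (bddAbove_eval hrepr hfin t) ⟨x, hx, rfl⟩

lemma exists_atom_lt
    {f : C(T, ℝ)} (hf : f ∈ atomsOf M) {t : T} {a : ℝ} (ha : a < maxM M t) :
    ∃ g ∈ atomsOf M, a < g t := by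
  obtain ⟨y, ⟨g, hg, rfl⟩, hy⟩ :=
    exists_lt_of_lt_csSup (Set.Nonempty.image _ ⟨f, hf⟩) ha
  exact ⟨g, hg, hy⟩

/-- Claim A: if `maxM ≥ f + q` on a set `D` whose closure contains `K`,
then `f` is sub-extremal on `K`. -/
lemma subextremal_of_dense
    (hrepr : M = Measure.sum fun n => (c n : ℝ≥0∞) • Measure.dirac (φ n))
    (hpos : ∀ n, c n ≠ 0 → 0 ≤ φ n ∧ φ n ≠ 0)
    (hfin : ∀ ε : ℝ, 0 < ε → {n | c n ≠ 0 ∧ ε < ‖φ n‖}.Finite)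
    {f : C(T, ℝ)} (hf : f ∈ atomsOf M) {K D : Set T} (hKD : K ⊆ closure D)
    {q : ℝ} (hq : 0 < q) (h : ∀ s ∈ D, f s + q ≤ maxM M s) :
    ∀ t ∈ K, f t < maxM M t := by
  have hG : {x ∈ atomsOf M | q/4 < ‖x‖}.Finite :=
    finite_atoms_norm hrepr hfin (by linarith)
  set G : Finset C(T, ℝ) := hG.toFinset with hGdef
  set C : Set T := ⋃ g ∈ G, {t | f t + q/2 ≤ g t} with hCdef
  have hCclosed : IsClosed C := by
    refine Set.Finite.isClosed_biUnion (Set.finite_mem_finset G) fun g _ => ?_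
    exact isClosed_le (by continuity) g.continuous
  have hDC : D ⊆ C := by
    intro s hs
    obtain ⟨g, hg, hgs⟩ := exists_atom_lt hf
      (lt_of_lt_of_le (by linarith : f s + q/2 < f s + q) (h s hs))
    have hg0 : 0 ≤ f s := atoms_nonneg hrepr hpos hf s
    have hnorm : q/4 < ‖g‖ := by
      have h1 : q/2 < g s := by linarith
      have h2 := (le_abs_self (g s)).trans (g.norm_coe_le_norm s)
      linarith
    have hgG : g ∈ G := by
      rw [hGdef, Set.Finite.mem_toFinset]; exact ⟨hg, hnorm⟩
    exact Set.mem_biUnion hgG (by simpa using hgs.le)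
  intro t ht
  have htC : t ∈ C := by
    rw [← hCclosed.closure_eq]
    exact closure_mono hDC (hKD ht)
  simp only [hCdef, Set.mem_iUnion, Set.mem_setOf_eq] at htC
  obtain ⟨g, hgG, hgt⟩ := htC
  have hgatom : g ∈ atomsOf M := ((Set.Finite.mem_toFinset hG).1 hgG).1
  calc f t < f t + q/2 := by linarith
    _ ≤ g t := hgt
    _ ≤ maxM M t := le_maxM hrepr hfin hgatom t

end CKplusAux

set_option maxHeartbeats 1000000 in
/-- for a closed set `K ⊆ T`, the set
`C_K^+ = {M ∈ M_p(C_0) : every atom f of M satisfies f(t) ≥ max(M)(t) for some t ∈ K}`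
is measurable for the σ-algebra on `M_p(C_0)` induced by the σ-algebra on measures
generated by the evaluation maps `M ↦ M(A)`, `A` Borel. -/
theorem measurableSet_CKplus {T : Type*} [MetricSpace T] [CompactSpace T]
    [MeasurableSpace C(T, ℝ)] [BorelSpace C(T, ℝ)]
    (K : Set T) (hK : IsClosed K) :
    MeasurableSet {M : {M : Measure C(T, ℝ) // IsMp M} |
      ∀ f ∈ atomsOf (M : Measure C(T, ℝ)), ∃ t ∈ K, maxM (M : Measure C(T, ℝ)) t ≤ f t} := by
  classical
  obtain ⟨D, hDK, hDc, hKD⟩ : ∃ D ⊆ K, D.Countable ∧ K ⊆ closure D := by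
    obtain ⟨s, hsc, hsd⟩ := TopologicalSpace.exists_countable_dense (↥K)
    exact ⟨Subtype.val '' s, by simp, hsc.image _, fun x hx =>
      (closure_subtype (x := (⟨x, hx⟩ : K))).1 (hsd _)⟩
  have : Inhabited C(T, ℝ) := ⟨0⟩
  obtain ⟨g, hg⟩ : ∃ g : ℕ → C(T, ℝ), DenseRange g :=
    ⟨TopologicalSpace.denseSeq C(T, ℝ), TopologicalSpace.denseRange_denseSeq _⟩
  set S : ℕ → ℚ → ℚ → Set (Measure C(T, ℝ)) := fun j r q =>
    {μ | μ (Metric.ball (g j) r) ≠ 0 ∧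
      ∀ t ∈ D, ∀ n : ℕ,
        μ {h : C(T, ℝ) | (g j) t + r + q - 1/(n+1) < h t} ≠ 0} with hSdef
  have hSmeas : ∀ j r q, MeasurableSet (S j r q) := by
    intro j r q
    have heq : S j r q =
        ((fun μ : Measure C(T, ℝ) => μ (Metric.ball (g j) r)) ⁻¹' ({0}ᶜ)) ∩
        ⋂ t ∈ D, ⋂ n : ℕ,
          (fun μ : Measure C(T, ℝ) =>
            μ {h : C(T, ℝ) | (g j) t + r + q - 1/(n+1) < h t}) ⁻¹' ({0}ᶜ) := by
      ext μ
      simp only [hSdef, Set.mem_setOf_eq, Set.mem_inter_iff, Set.mem_preimage,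
        Set.mem_compl_iff, Set.mem_singleton_iff, Set.mem_iInter]
    rw [heq]
    refine MeasurableSet.inter ?_ ?_
    · exact (Measure.measurable_coe Metric.isOpen_ball.measurableSet)
        (MeasurableSet.compl (measurableSet_singleton 0))
    · refine MeasurableSet.biInter hDc fun t _ => MeasurableSet.iInter fun n => ?_
      have hopen : IsOpen {h : C(T, ℝ) | (g j) t + r + q - 1/(n+1) < h t} :=
        isOpen_lt continuous_const (ContinuousEvalConst.continuous_eval_const t)
      exact (Measure.measurable_coe hopen.measurableSet)
        (MeasurableSet.compl (measurableSet_singleton 0))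
  set Bad : Set (Measure C(T, ℝ)) :=
    ⋃ j, ⋃ (r : ℚ), ⋃ (q : ℚ), ⋃ (_ : 0 < r ∧ 0 < q), S j r q with hBaddef
  have hBad : MeasurableSet Bad :=
    MeasurableSet.iUnion fun j => MeasurableSet.iUnion fun r =>
      MeasurableSet.iUnion fun q => MeasurableSet.iUnion fun _ => hSmeas j r q
  have key : ∀ M : {M : Measure C(T, ℝ) // IsMp M},
      (∀ f ∈ atomsOf (M : Measure C(T, ℝ)), ∃ t ∈ K,
        maxM (M : Measure C(T, ℝ)) t ≤ f t) ↔ (M : Measure C(T, ℝ)) ∉ Bad := by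
    rintro ⟨M, c, φ, hrepr, hpos, hfin⟩
    simp only
    constructor
    · -- Good → not Bad
      intro hGood hBadM
      simp only [hBaddef, hSdef, Set.mem_iUnion, Set.mem_setOf_eq] at hBadM
      obtain ⟨j, r, q, ⟨hr, hq⟩, hball, hD⟩ := hBadM
      obtain ⟨f, hf, hfball⟩ :=
        (CKplusAux.M_apply_ne_zero hrepr Metric.isOpen_ball.measurableSet).1 hball
      have hfd : ∀ s ∈ D, f s + (q:ℝ) ≤ maxM M s := by
        intro s hs
        have hle : ∀ n : ℕ, (g j) s + r + q - 1/(n+1:ℝ) ≤ maxM M s := by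
          intro n
          obtain ⟨h2, hh2, hlt⟩ :=
            (CKplusAux.M_apply_ne_zero hrepr
              (isOpen_lt continuous_const
                (ContinuousEvalConst.continuous_eval_const s)).measurableSet).1 (hD s hs n)
          exact le_trans (le_of_lt hlt) (CKplusAux.le_maxM hrepr hfin hh2 s)
        have hgs : (g j) s + r + q ≤ maxM M s := by
          by_contra hcon
          push_neg at hcon
          obtain ⟨n, hn⟩ := exists_nat_one_div_lt (sub_pos.2 hcon)
          exact absurd (hle n) (by push_neg; linarith)
        have hfg : f s ≤ (g j) s + (r:ℝ) := by
          have h1 : dist (f s) ((g j) s) ≤ dist f (g j) := ContinuousMap.dist_apply_le_dist s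
          have h2 : dist f (g j) < (r:ℝ) := Metric.mem_ball.1 hfball
          rw [Real.dist_eq] at h1
          have h3 := (le_abs_self (f s - (g j) s)).trans (h1.trans h2.le)
          linarith
        linarith
      have hsubext := CKplusAux.subextremal_of_dense hrepr hpos hfin hf hKD
        (q := (q:ℝ)) (by exact_mod_cast hq) hfd
      obtain ⟨t, ht, hmax⟩ := hGood f hf
      exact absurd (hsubext t ht) (not_lt.2 hmax)
    · -- not Bad → Good
      intro hnotBad
      by_contra hGood
      push_neg at hGood
      obtain ⟨f, hf, hsub⟩ := hGood
      have hsub2 : ∀ t ∈ K, f t < maxM M t := fun t ht => hsub t ht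
      have hmargin : ∃ q0 : ℝ, 0 < q0 ∧ ∀ t ∈ K, f t + q0 ≤ maxM M t := by
        rcases K.eq_empty_or_nonempty with hKe | hKne
        · exact ⟨1, one_pos, by simp [hKe]⟩
        · have hchoice : ∀ t : K, ∃ (h2 : C(T, ℝ)) (ε : ℝ),
              h2 ∈ atomsOf M ∧ 0 < ε ∧ f (t:T) + ε < h2 (t:T) := by
            intro t
            obtain ⟨h2, hh2, hlt⟩ := CKplusAux.exists_atom_lt hf (hsub2 t t.2)
            exact ⟨h2, (h2 t - f t)/2, hh2, by linarith, by linarith⟩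
          choose ga ea hga hea hlt using hchoice
          set V : K → Set T := fun t => {s | f s + ea t < (ga t) s} with hVdef
          have hVopen : ∀ t, IsOpen (V t) :=
            fun t => isOpen_lt (f.continuous.add continuous_const) (ga t).continuous
          have hcover : K ⊆ ⋃ t : K, V t := fun s hs =>
            Set.mem_iUnion.2 ⟨⟨s, hs⟩, hlt ⟨s, hs⟩⟩
          obtain ⟨F, hF⟩ := (hK.isCompact).elim_finite_subcover V hVopen hcover
          have hFne : F.Nonempty := by
            obtain ⟨s, hs⟩ := hKne
            have := hF hs
            simp only [Set.mem_iUnion] at this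
            obtain ⟨t, htF, -⟩ := this
            exact ⟨t, htF⟩
          refine ⟨F.inf' hFne ea, ?_, ?_⟩
          · exact (Finset.lt_inf'_iff hFne).2 fun t _ => hea t
          · intro s hs
            have := hF hs
            simp only [Set.mem_iUnion] at this
            obtain ⟨t, htF, hsV⟩ := this
            have h1 : F.inf' hFne ea ≤ ea t := Finset.inf'_le ea htF
            have h2 : f s + ea t < (ga t) s := hsV
            have h3 : (ga t) s ≤ maxM M s := CKplusAux.le_maxM hrepr hfin (hga t) s
            linarith
      obtain ⟨q0, hq0, hq02⟩ := hmargin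
      obtain ⟨r, hr0, hr⟩ := exists_rat_btwn (show (0:ℝ) < q0/3 by linarith)
      have hr02 : (0:ℝ) < (r:ℝ) := by exact_mod_cast hr0
      obtain ⟨j, hj⟩ : ∃ j, dist f (g j) < (r:ℝ) := by
        obtain ⟨j, hj⟩ := hg.exists_dist_lt f hr02
        exact ⟨j, hj⟩
      obtain ⟨q, hq02', hq⟩ := exists_rat_btwn (show (0:ℝ) < q0 - 2*r by linarith)
      have hqpos : (0:ℚ) < q := by exact_mod_cast hq02'
      apply hnotBad
      simp only [hBaddef, hSdef, Set.mem_iUnion, Set.mem_setOf_eq]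
      refine ⟨j, r, q, ⟨by exact_mod_cast hr0, hqpos⟩, ?_, ?_⟩
      · exact (CKplusAux.M_apply_ne_zero hrepr Metric.isOpen_ball.measurableSet).2
          ⟨f, hf, Metric.mem_ball.2 hj⟩
      · intro t ht n
        have hjt : (g j) t ≤ f t + (r:ℝ) := by
          have h1 : dist (f t) ((g j) t) ≤ dist f (g j) := ContinuousMap.dist_apply_le_dist t
          rw [Real.dist_eq] at h1
          have h3 : (g j) t - f t ≤ |f t - (g j) t| := by
            rw [abs_sub_comm]; exact le_abs_self _
          linarith [h1.trans hj.le]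
        have hpos1 : (0:ℝ) < 1/(n+1:ℝ) := by positivity
        have hlt : (g j) t + (r:ℝ) + (q:ℝ) - 1/(n+1:ℝ) < maxM M t := by
          have := hq02 t (hDK ht)
          linarith
        obtain ⟨h2, hh2, hh2t⟩ := CKplusAux.exists_atom_lt hf hlt
        exact (CKplusAux.M_apply_ne_zero hrepr
          (isOpen_lt continuous_const
            (ContinuousEvalConst.continuous_eval_const t)).measurableSet).2
          ⟨h2, hh2, hh2t⟩
  have hset : {M : {M : Measure C(T, ℝ) // IsMp M} |
      ∀ f ∈ atomsOf (M : Measure C(T, ℝ)), ∃ t ∈ K,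
        maxM (M : Measure C(T, ℝ)) t ≤ f t}
      = Subtype.val ⁻¹' Badᶜ := by
    ext M
    simp only [Set.mem_setOf_eq, Set.mem_preimage, Set.mem_compl_iff]
    exact key M
  rw [hset]
  exact measurable_subtype_coe hBad.compl
end
end

section
/- Let Φ ∈ M_p(C_0) be a point measure and K ⊆ T closed, and let η = max(Φ). The K-extremal point measure Φ_K^+ (the sum of δ_f over atoms f of Φ that are not K-sub-extremal) is the unique sub-point measure Φ̃ of Φ such that Φ̃ ∈ C_K^+ and Φ − Φ̃ ∈ C_K^-(max(Φ̃)). That is: (a) every atom of Φ̃ attains max(Φ̃) at some point of K; (b) every atom g of Φ − Φ̃ satisfies g <_K max(Φ̃); and Φ_K^+ is the only sub-point measure of Φ with these two properties. -/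
open MeasureTheory Set ENNReal

noncomputable section

section Aux

open Filter

variable {T : Type*} [MetricSpace T] [CompactSpace T] [MeasurableSpace C(T, ℝ)]
  [BorelSpace C(T, ℝ)]

lemma atomsOf_sum_diracs (c : ℕ → ℕ) (φ : ℕ → C(T, ℝ)) :
    atomsOf (Measure.sum (fun n => (c n : ℝ≥0∞) • Measure.dirac (φ n))) =
      {f | ∃ n, c n ≠ 0 ∧ φ n = f} := by
  ext f
  simp only [atomsOf, mem_setOf_eq, Measure.sum_apply _ (measurableSet_singleton f),
    Measure.smul_apply, smul_eq_mul]
  rw [Ne, ENNReal.tsum_eq_zero]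
  push_neg
  constructor
  · rintro ⟨n, hn⟩
    refine ⟨n, fun h => hn (by rw [h, Nat.cast_zero, zero_mul]), ?_⟩
    by_contra h
    rw [Measure.dirac_apply' _ (measurableSet_singleton f),
      Set.indicator_of_notMem (by simp [h]), mul_zero] at hn
    exact hn rfl
  · rintro ⟨n, hc, hφ⟩
    refine ⟨n, ?_⟩
    rw [Measure.dirac_apply_of_mem (by simp [hφ])]
    simpa using hc

lemma atoms_nonneg {M : Measure C(T, ℝ)} (hM : IsMp M) :
    ∀ f ∈ atomsOf M, (0 : C(T, ℝ)) ≤ f := by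
  obtain ⟨c, φ, rfl, hpos, -⟩ := hM
  rw [atomsOf_sum_diracs]
  rintro f ⟨n, hc, rfl⟩
  exact (hpos n hc).1

lemma atoms_nonneg_apply {M : Measure C(T, ℝ)} (hM : IsMp M) {f : C(T, ℝ)}
    (hf : f ∈ atomsOf M) (t : T) : 0 ≤ f t :=
  (atoms_nonneg hM f hf) t

lemma bddAbove_atoms {M : Measure C(T, ℝ)} (hM : IsMp M) (t : T) :
    BddAbove ((fun f : C(T, ℝ) => f t) '' atomsOf M) := by
  obtain ⟨c, φ, rfl, hpos, hfin⟩ := hM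
  rw [atomsOf_sum_diracs]
  have hfin1 := hfin 1 one_pos
  refine ⟨1 + ∑ n ∈ hfin1.toFinset, ‖φ n‖, ?_⟩
  rintro v ⟨f, ⟨n, hc, rfl⟩, rfl⟩
  have h1 : φ n t ≤ ‖φ n‖ :=
    (le_abs_self _).trans ((φ n).norm_coe_le_norm t)
  by_cases h2 : 1 < ‖φ n‖
  · have hmem : n ∈ hfin1.toFinset := by simp [hc, h2]
    have := Finset.single_le_sum (f := fun n => ‖φ n‖) (fun i _ => norm_nonneg _) hmem
    linarith
  · have hs : (0:ℝ) ≤ ∑ n ∈ hfin1.toFinset, ‖φ n‖ :=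
      Finset.sum_nonneg fun i _ => norm_nonneg _
    push_neg at h2
    linarith

lemma maxM_nonneg {M : Measure C(T, ℝ)} (hM : IsMp M) (t : T) : 0 ≤ maxM M t := by
  refine Real.sSup_nonneg ?_
  rintro v ⟨f, hf, rfl⟩
  exact atoms_nonneg_apply hM hf t

lemma le_maxM {M : Measure C(T, ℝ)} (hM : IsMp M) {f : C(T, ℝ)}
    (hf : f ∈ atomsOf M) (t : T) : f t ≤ maxM M t :=
  le_csSup (bddAbove_atoms hM t) (mem_image_of_mem _ hf)

lemma maxM_mono {M₁ M₂ : Measure C(T, ℝ)} (hM₂ : IsMp M₂)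
    (h : atomsOf M₁ ⊆ atomsOf M₂) (t : T) : maxM M₁ t ≤ maxM M₂ t := by
  rcases (atomsOf M₁).eq_empty_or_nonempty with he | hne
  · simp only [maxM, he, image_empty, Real.sSup_empty]
    exact maxM_nonneg hM₂ t
  · exact csSup_le_csSup (bddAbove_atoms hM₂ t) (hne.image _) (image_mono h)

lemma exists_maxM_attained {M : Measure C(T, ℝ)} (hM : IsMp M)
    (hne : (atomsOf M).Nonempty) (t : T) :
    ∃ f ∈ atomsOf M, maxM M t ≤ f t := by
  have hMcopy := hM
  obtain ⟨c, φ, hsum, hpos, hfin⟩ := hMcopy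
  have himg : ((fun f : C(T, ℝ) => f t) '' atomsOf M).Nonempty := hne.image _
  by_cases hm0 : maxM M t ≤ 0
  · obtain ⟨f, hf⟩ := hne
    exact ⟨f, hf, hm0.trans (atoms_nonneg_apply hM hf t)⟩
  push_neg at hm0
  set m := maxM M t with hm
  have hhalf : m / 2 < m := half_lt_self hm0
  obtain ⟨v, hv, hv2⟩ := exists_lt_of_lt_csSup himg hhalf
  obtain ⟨f0, hf0, rfl⟩ := hv
  have hchar : atomsOf M = {f | ∃ n, c n ≠ 0 ∧ φ n = f} := by
    rw [hsum, atomsOf_sum_diracs]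
  rw [hchar] at hf0
  obtain ⟨n0, hc0, hφ0⟩ := hf0
  have hfinh := hfin (m / 2) (by positivity)
  have hn0mem : n0 ∈ hfinh.toFinset := by
    simp only [Set.Finite.mem_toFinset, mem_setOf_eq]
    refine ⟨hc0, lt_of_lt_of_le hv2 ?_⟩
    rw [← hφ0] at *
    exact (le_abs_self _).trans ((φ n0).norm_coe_le_norm t)
  obtain ⟨ns, hnsmem, hnsmax⟩ :=
    Finset.exists_max_image hfinh.toFinset (fun n => φ n t) ⟨n0, hn0mem⟩
  have hnsc : c ns ≠ 0 := (hfinh.mem_toFinset.mp hnsmem).1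
  have hnsatom : φ ns ∈ atomsOf M := by rw [hchar]; exact ⟨ns, hnsc, rfl⟩
  refine ⟨φ ns, hnsatom, ?_⟩
  refine csSup_le himg ?_
  rintro v ⟨f, hf, rfl⟩
  rw [hchar] at hf
  obtain ⟨k, hck, rfl⟩ := hf
  by_cases hk : m / 2 < ‖φ k‖
  · exact hnsmax k (by simp only [Set.Finite.mem_toFinset, mem_setOf_eq]; exact ⟨hck, hk⟩)
  · push_neg at hk
    have h1 : φ k t ≤ m / 2 :=
      ((le_abs_self _).trans ((φ k).norm_coe_le_norm t)).trans hk
    have h2 : φ n0 t ≤ φ ns t := hnsmax n0 hn0mem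
    rw [hφ0] at h2
    linarith
lemma null_of_no_atoms {M : Measure C(T, ℝ)} (hM : IsMp M) {B : Set C(T, ℝ)}
    (hB : MeasurableSet B) (h : ∀ f ∈ atomsOf M, f ∉ B) : M B = 0 := by
  obtain ⟨c, φ, rfl, hpos, -⟩ := hM
  rw [Measure.sum_apply _ hB, ENNReal.tsum_eq_zero]
  intro n
  rcases eq_or_ne (c n) 0 with h0 | h0
  · simp [h0]
  · have : φ n ∉ B := h _ ((atomsOf_sum_diracs c φ) ▸ ⟨n, h0, rfl⟩)
    rw [Measure.smul_apply, Measure.dirac_apply' _ hB, Set.indicator_of_notMem this]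
    simp

lemma isClosed_extremalSet (K : Set T) (hK : IsClosed K) (Φ : Measure C(T, ℝ))
    (hΦ : IsMp Φ) : IsClosed {f : C(T, ℝ) | ∃ t ∈ K, maxM Φ t ≤ f t} := by
  refine IsSeqClosed.isClosed ?_
  intro x p hx hp
  choose ts hts hle using hx
  obtain ⟨a, haK, σ, hσ, hta⟩ := hK.isCompact.tendsto_subseq hts
  refine ⟨a, haK, ?_⟩
  have hpt : Tendsto (fun k => p (ts (σ k))) atTop (nhds (p a)) :=
    (p.continuous.tendsto a).comp hta
  have hxp : Tendsto (fun k => x (σ k) (ts (σ k))) atTop (nhds (p a)) := by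
    rw [tendsto_iff_dist_tendsto_zero]
    have hb : ∀ k, dist (x (σ k) (ts (σ k))) (p a)
        ≤ dist (x (σ k)) p + dist (p (ts (σ k))) (p a) := fun k =>
      (dist_triangle _ (p (ts (σ k))) _).trans
        (by gcongr; exact ContinuousMap.dist_apply_le_dist _)
    have h1 : Tendsto (fun k => dist (x (σ k)) p) atTop (nhds 0) :=
      tendsto_iff_dist_tendsto_zero.mp (hp.comp hσ.tendsto_atTop)
    have h2 : Tendsto (fun k => dist (p (ts (σ k))) (p a)) atTop (nhds 0) :=
      tendsto_iff_dist_tendsto_zero.mp hpt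
    exact squeeze_zero (fun k => dist_nonneg) hb (by simpa using h1.add h2)
  have hpa0 : 0 ≤ p a :=
    le_of_tendsto_of_tendsto' tendsto_const_nhds hxp
      (fun k => (maxM_nonneg hΦ _).trans (hle (σ k)))
  refine Real.sSup_le ?_ hpa0
  rintro v ⟨g, hg, rfl⟩
  have hg0 : Tendsto (fun k => g (ts (σ k))) atTop (nhds (g a)) :=
    (g.continuous.tendsto a).comp hta
  exact le_of_tendsto_of_tendsto' hg0 hxp
    (fun k => (le_maxM hΦ hg _).trans (hle (σ k)))

end Aux

/-- for `Φ ∈ M_p(C_0)` and `K ⊆ T` closed, the `K`-extremal point measure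
`Φ_K^+` (restriction of `Φ` to the set of `K`-extremal functions) is the unique
sub-point-measure `Φ̃` of `Φ` satisfying (a) every atom of `Φ̃` attains `max(Φ̃)` at some
point of `K`, and (b) every atom `g` of `Φ − Φ̃` satisfies `g <_K max(Φ̃)`. -/
theorem extremal_decomposition_unique {T : Type*} [MetricSpace T] [CompactSpace T]
    [MeasurableSpace C(T, ℝ)] [BorelSpace C(T, ℝ)]
    (K : Set T) (hK : IsClosed K)
    (Φ : Measure C(T, ℝ)) (hΦ : IsMp Φ) :
    -- Φ_K^+ and Φ_K^-
    (let Φp := Φ.restrict {f : C(T, ℝ) | ∃ t ∈ K, maxM Φ t ≤ f t}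
     let Φm := Φ.restrict {f : C(T, ℝ) | ∀ t ∈ K, f t < maxM Φ t}
     -- decomposition:
     Φ = Φp + Φm ∧
     -- (a) every atom of Φ_K^+ is extremal for max(Φ_K^+):
     (∀ f ∈ atomsOf Φp, ∃ t ∈ K, maxM Φp t ≤ f t) ∧
     -- (b) every atom of Φ − Φ_K^+ = Φ_K^- lies strictly below max(Φ_K^+) on K:
     (∀ g ∈ atomsOf Φm, ∀ t ∈ K, g t < maxM Φp t)) ∧
    -- uniqueness among sub-point-measures of Φ:
    (∀ Φt Ψ : Measure C(T, ℝ), IsMp Φt → IsMp Ψ → Φ = Φt + Ψ →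
      (∀ f ∈ atomsOf Φt, ∃ t ∈ K, maxM Φt t ≤ f t) →
      (∀ g ∈ atomsOf Ψ, ∀ t ∈ K, g t < maxM Φt t) →
      Φt = Φ.restrict {f : C(T, ℝ) | ∃ t ∈ K, maxM Φ t ≤ f t}) := by
  classical
  set S : Set C(T, ℝ) := {f : C(T, ℝ) | ∃ t ∈ K, maxM Φ t ≤ f t} with hSdef
  have hSm : MeasurableSet S := (isClosed_extremalSet K hK Φ hΦ).measurableSet
  have hcompl : {f : C(T, ℝ) | ∀ t ∈ K, f t < maxM Φ t} = Sᶜ := by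
    ext f
    constructor
    · intro h hS
      obtain ⟨t, ht, hle⟩ := hS
      exact absurd hle (not_le.mpr (h t ht))
    · intro h t ht
      by_contra hc
      exact h ⟨t, ht, not_lt.mp hc⟩
  -- atoms of restrictions
  have hatomrest : ∀ (B : Set C(T, ℝ)), ∀ f, f ∈ atomsOf (Φ.restrict B) ↔
      f ∈ atomsOf Φ ∧ f ∈ B := by
    intro B f
    simp only [atomsOf, mem_setOf_eq, Measure.restrict_apply (measurableSet_singleton f)]
    by_cases hf : f ∈ B
    · rw [Set.inter_eq_left.mpr (singleton_subset_iff.mpr hf)]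
      tauto
    · rw [Set.singleton_inter_eq_empty.mpr hf]
      constructor
      · intro h
        exact absurd measure_empty h
      · rintro ⟨-, hfB⟩
        exact absurd hfB hf
  -- maxM of Φp ≤ maxM Φ
  have hsubP : atomsOf (Φ.restrict S) ⊆ atomsOf Φ := fun f hf => ((hatomrest S f).mp hf).1
  have hmaxPle : ∀ t, maxM (Φ.restrict S) t ≤ maxM Φ t := fun t =>
    maxM_mono hΦ hsubP t
  -- maxM Φ ≤ maxM Φp on K (attainment)
  have hmaxPge : ∀ f₀ ∈ atomsOf Φ, ∀ t ∈ K, maxM Φ t ≤ maxM (Φ.restrict S) t := by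
    intro f₀ hf₀ t ht
    obtain ⟨f, hf, hfle⟩ := exists_maxM_attained hΦ ⟨f₀, hf₀⟩ t
    have hfS : f ∈ S := ⟨t, ht, hfle⟩
    have hfatom : f ∈ atomsOf (Φ.restrict S) := (hatomrest S f).mpr ⟨hf, hfS⟩
    refine hfle.trans ?_
    refine le_csSup ?_ (mem_image_of_mem _ hfatom)
    exact (bddAbove_atoms hΦ t).mono (image_mono hsubP)
  constructor
  · refine ⟨?_, ?_, ?_⟩
    · rw [hcompl]
      exact (Measure.restrict_add_restrict_compl (μ := Φ) hSm).symm
    · intro f hf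
      obtain ⟨hfΦ, t, ht, hfle⟩ := (hatomrest S f).mp hf
      exact ⟨t, ht, (hmaxPle t).trans hfle⟩
    · intro g hg t ht
      rw [hcompl] at hg
      obtain ⟨hgΦ, hgc⟩ := (hatomrest Sᶜ g).mp hg
      have hglt : g t < maxM Φ t := by
        by_contra h
        exact hgc ⟨t, ht, not_lt.mp h⟩
      exact hglt.trans_le (hmaxPge g hgΦ t ht)
  · intro Φt Ψ hΦt hΨ hsum ha hb
    have hatomsplit : ∀ f ∈ atomsOf Φ, f ∈ atomsOf Φt ∨ f ∈ atomsOf Ψ := by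
      intro f hf
      by_contra h
      push_neg at h
      simp only [atomsOf, mem_setOf_eq, not_not] at h
      exact hf (by rw [hsum, Measure.add_apply, h.1, h.2, add_zero])
    have hsubt : atomsOf Φt ⊆ atomsOf Φ := by
      intro f hf h0
      apply hf
      rw [hsum, Measure.add_apply] at h0
      exact (add_eq_zero.mp h0).1
    have hmax : ∀ t ∈ K, maxM Φ t = maxM Φt t := by
      intro t ht
      refine le_antisymm ?_ (maxM_mono hΦ hsubt t)
      refine Real.sSup_le ?_ (maxM_nonneg hΦt t)
      rintro v ⟨f, hf, rfl⟩
      rcases hatomsplit f hf with h | h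
      · exact le_maxM hΦt h t
      · exact (hb f h t ht).le
    have hΦtS : ∀ f ∈ atomsOf Φt, f ∈ S := by
      intro f hf
      obtain ⟨t, ht, hle⟩ := ha f hf
      exact ⟨t, ht, (hmax t ht) ▸ hle⟩
    have hΨS : ∀ g ∈ atomsOf Ψ, g ∉ S := by
      rintro g hg ⟨t, ht, hle⟩
      exact absurd hle (not_le.mpr ((hb g hg t ht).trans_le (hmax t ht).ge))
    have hΦtnull : Φt Sᶜ = 0 :=
      null_of_no_atoms hΦt hSm.compl fun f hf hc => hc (hΦtS f hf)
    have hΨnull : Ψ S = 0 := null_of_no_atoms hΨ hSm hΨS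
    ext A hA
    rw [Measure.restrict_apply hA]
    have h1 : Φt (A \ S) = 0 :=
      measure_mono_null (fun x hx => hx.2) hΦtnull
    have h2 : Ψ (A ∩ S) = 0 := measure_mono_null inter_subset_right hΨnull
    have h3 := measure_inter_add_diff (μ := Φt) A hSm
    have h4 : Φ (A ∩ S) = Φt (A ∩ S) + Ψ (A ∩ S) := by
      rw [hsum, Measure.add_apply]
    rw [h4, h2, add_zero, ← h3, h1, add_zero]
end
end

section
/- Let Φ be a Poisson random measure on C_0 with intensity μ, η = max(Φ), and K ⊆ T closed. The K-extremal point measure Φ_K^+ is almost surely finite if and only if either (i) μ(C_0) < ∞, or (ii) μ(C_0) = ∞ and inf_{t∈K} η(t) > 0 almost surely. -/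
open MeasureTheory Set ENNReal

noncomputable section

open Classical NNReal in
lemma nat_tsum_finite {a : ℕ → ℕ} (h : (∑' n, (a n : ℝ≥0∞)) ≠ ⊤) :
    ∃ m : ℕ, (∑' n, (a n : ℝ≥0∞)) = m := by
  have h2 : Summable (fun n => (a n : ℝ≥0)) := by
    rw [← ENNReal.tsum_coe_ne_top_iff_summable]
    simpa using h
  have h2' : Summable (fun n => ((a n : ℝ≥0) : ℝ)) := NNReal.summable_coe.mpr h2
  have h3 : Filter.Tendsto (fun n => ((a n : ℝ≥0) : ℝ)) Filter.atTop (nhds 0) :=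
    h2'.tendsto_atTop_zero
  have h4 : ∀ᶠ n in Filter.atTop, ((a n : ℝ≥0) : ℝ) < 1 :=
    h3.eventually (gt_mem_nhds one_pos)
  obtain ⟨N, hN⟩ := Filter.eventually_atTop.mp h4
  have hz : ∀ n ∉ Finset.range N, (a n : ℝ≥0∞) = 0 := by
    intro n hn
    have h5 := hN n (by simpa using hn)
    have h6 : a n = 0 := by exact_mod_cast Nat.lt_one_iff.mp (by exact_mod_cast h5)
    simp [h6]
  refine ⟨∑ n ∈ Finset.range N, a n, ?_⟩
  rw [tsum_eq_sum hz]
  push_cast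
  rfl

lemma tsum_poisson (l : ℝ) (hl : 0 ≤ l) :
    ∑' n : ℕ, ENNReal.ofReal (Real.exp (-l) * l ^ n / n.factorial) = 1 := by
  have := (ProbabilityTheory.poissonPMFRealSum (⟨l, hl⟩ : NNReal)).tsum_eq
  have h2 : ∀ n : ℕ, ProbabilityTheory.poissonPMFReal (⟨l, hl⟩ : NNReal) n
      = Real.exp (-l) * l ^ n / n.factorial := fun n => rfl
  have hsumm : Summable fun n : ℕ => Real.exp (-l) * l ^ n / n.factorial := by
    have := (ProbabilityTheory.poissonPMFRealSum ⟨l, hl⟩).summable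
    exact this
  rw [← ENNReal.ofReal_tsum_of_nonneg (fun n => by positivity) hsumm]
  rw [show (∑' n : ℕ, Real.exp (-l) * l ^ n / n.factorial) = 1 from this]
  simp

open Classical in
lemma sumDirac_apply {α : Type*} [MeasurableSpace α] (c : ℕ → ℕ) (φ : ℕ → α)
    {A : Set α} (hA : MeasurableSet A) :
    Measure.sum (fun n => (c n : ℝ≥0∞) • Measure.dirac (φ n)) A
      = ∑' n, ((if φ n ∈ A then c n else 0 : ℕ) : ℝ≥0∞) := by
  rw [Measure.sum_apply _ hA]
  congr 1; ext n
  rw [Measure.smul_apply, Measure.dirac_apply' _ hA]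
  by_cases h : φ n ∈ A <;> simp [h, indicator]

open Classical in
lemma atoms_eq {α : Type*} [MeasurableSpace α] [MeasurableSingletonClass α]
    (c : ℕ → ℕ) (φ : ℕ → α) :
    atomsOf (Measure.sum fun n => (c n : ℝ≥0∞) • Measure.dirac (φ n))
      = {f | ∃ n, c n ≠ 0 ∧ φ n = f} := by
  ext f
  simp only [atomsOf, mem_setOf_eq]
  rw [sumDirac_apply c φ (measurableSet_singleton f)]
  rw [Ne, ENNReal.tsum_eq_zero]
  push_neg
  constructor
  · rintro ⟨n, hn⟩
    by_cases h : φ n ∈ ({f} : Set α)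
    · exact ⟨n, by simpa [h] using hn, by simpa using h⟩
    · simp [h] at hn
  · rintro ⟨n, hc, hf⟩
    exact ⟨n, by simp [hf, hc]⟩

lemma bddAbove_eval {T : Type*} [MetricSpace T] [CompactSpace T]
    (c : ℕ → ℕ) (φ : ℕ → C(T, ℝ))
    (hfin : {n | c n ≠ 0 ∧ (1:ℝ) < ‖φ n‖}.Finite) (t : T) :
    BddAbove ((fun f : C(T, ℝ) => f t) '' {f | ∃ n, c n ≠ 0 ∧ φ n = f}) := by
  refine ⟨1 + ∑ n ∈ hfin.toFinset, ‖φ n‖, ?_⟩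
  rintro x ⟨f, ⟨n, hc, rfl⟩, rfl⟩
  have hb : (φ n) t ≤ ‖φ n‖ := by
    calc (φ n) t ≤ |(φ n) t| := le_abs_self _
    _ = ‖(φ n) t‖ := (Real.norm_eq_abs _).symm
    _ ≤ ‖φ n‖ := (φ n).norm_coe_le_norm t
  have hs : (0:ℝ) ≤ ∑ n ∈ hfin.toFinset, ‖φ n‖ :=
    Finset.sum_nonneg fun i _ => norm_nonneg _
  by_cases h1 : 1 < ‖φ n‖
  · have hn : n ∈ hfin.toFinset := by simp [hc, h1]
    have h2 := Finset.single_le_sum (f := fun n => ‖φ n‖) (fun i _ => norm_nonneg _) hn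
    linarith
  · push_neg at h1; simp only []; linarith

/-- Proposition 1: `Φ_K^+` is a.s. finite iff either `μ(C_0) < ∞`,
or `μ(C_0) = ∞` and `inf_{t ∈ K} η(t) > 0` almost surely. -/
theorem extremal_finite_iff {T : Type*} [MetricSpace T] [CompactSpace T]
    [MeasurableSpace C(T, ℝ)] [BorelSpace C(T, ℝ)]
    {Ω : Type*} [MeasurableSpace Ω] (P : Measure Ω) [IsProbabilityMeasure P]
    (μ : Measure C(T, ℝ)) (hμ : ∀ ε : ℝ, 0 < ε → μ {f : C(T, ℝ) | ε < ‖f‖} ≠ ⊤)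
    (hμ0 : ∀ᵐ f ∂μ, 0 ≤ f ∧ f ≠ 0)
    (Φ : Ω → Measure C(T, ℝ)) (hP : IsPoissonPM P Φ μ) (hMp : ∀ ω, IsMp (Φ ω))
    (K : Set T) (hK : IsClosed K) (hKne : K.Nonempty)
    (Φp : Ω → Measure C(T, ℝ))
    (hΦp : ∀ ω, Φp ω = (Φ ω).restrict {f : C(T, ℝ) | ∃ t ∈ K, maxM (Φ ω) t ≤ f t}) :
    (∀ᵐ ω ∂P, Φp ω Set.univ < ⊤) ↔
      (μ Set.univ < ⊤ ∨
        (μ Set.univ = ⊤ ∧ ∀ᵐ ω ∂P, ∃ ε : ℝ, 0 < ε ∧ ∀ t ∈ K, ε ≤ maxM (Φ ω) t)) := by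
  classical
  haveI : MeasurableSingletonClass C(T, ℝ) := ⟨fun f => isClosed_singleton.measurableSet⟩
  -- Φp ω univ = Φ ω S(ω)
  have hΦpS : ∀ ω, Φp ω Set.univ = Φ ω {f : C(T, ℝ) | ∃ t ∈ K, maxM (Φ ω) t ≤ f t} := by
    intro ω
    rw [hΦp ω, Measure.restrict_apply MeasurableSet.univ, Set.univ_inter]
  have hnat : ∀ (ω) (A : Set C(T, ℝ)), MeasurableSet A → Φ ω A ≠ ⊤ →
      ∃ m : ℕ, Φ ω A = m := by
    intro ω A hA hne
    obtain ⟨c, φ, hrep, -, -⟩ := hMp ω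
    rw [hrep, sumDirac_apply c φ hA] at hne ⊢
    exact nat_tsum_finite hne
  constructor
  · intro has
    by_cases hμt : μ Set.univ = ⊤
    · right
      refine ⟨hμt, ?_⟩
      -- Step 1 : Φ ω univ = ⊤ a.s.
      have step1 : ∀ᵐ ω ∂P, Φ ω Set.univ = ⊤ := by
        set A : ℕ → Set C(T, ℝ) := fun k => {f : C(T, ℝ) | 1/((k:ℝ)+1) < ‖f‖} with hA
        have hAmeas : ∀ k, MeasurableSet (A k) := fun k =>
          (isOpen_lt continuous_const continuous_norm).measurableSet
        have hAne : ∀ k, μ (A k) ≠ ⊤ := fun k => hμ _ (by positivity)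
        have hAmono : Monotone A := by
          intro k l hkl f hf
          simp only [hA, mem_setOf_eq] at hf ⊢
          have hcast : (k:ℝ) ≤ (l:ℝ) := Nat.cast_le.mpr hkl
          have h1 : 1/((l:ℝ)+1) ≤ 1/((k:ℝ)+1) :=
            one_div_le_one_div_of_le (by positivity) (by linarith)
          linarith
        have hcup : μ (⋃ k, A k) = ⊤ := by
          have hae3 : ∀ᵐ f ∂μ, f ∈ ⋃ k, A k := by
            filter_upwards [hμ0] with f hf
            have hn : 0 < ‖f‖ := norm_pos_iff.mpr hf.2
            obtain ⟨k, hk⟩ := exists_nat_one_div_lt hn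
            exact mem_iUnion.mpr ⟨k, hk⟩
          have h0 : μ ((⋃ k, A k)ᶜ) = 0 := by
            rw [ae_iff] at hae3
            exact hae3
          have := measure_univ_le_add_compl (⋃ k, A k) (μ := μ)
          rw [hμt, h0, add_zero] at this
          exact top_le_iff.mp this
        have hiSup : ⨆ k, μ (A k) = ⊤ := by
          rw [← hAmono.directed_le.measure_iUnion]
          exact hcup
        have hN0 : ∀ N : ℕ, P {ω | Φ ω Set.univ ≤ (N:ℝ≥0∞)} = 0 := by
          intro N
          have key : ∀ δ : ℝ, 0 < δ → P {ω | Φ ω Set.univ ≤ (N:ℝ≥0∞)} ≤ ENNReal.ofReal δ := by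
            intro δ hδ
            have htend : Filter.Tendsto (fun x : ℝ => ((N:ℝ)+1) * (x ^ N * Real.exp (-x)))
                Filter.atTop (nhds 0) := by
              have h := (Real.tendsto_pow_mul_exp_neg_atTop_nhds_zero N).const_mul ((N:ℝ)+1)
              simpa using h
            have hev : ∀ᶠ x in Filter.atTop, ((N:ℝ)+1) * (x ^ N * Real.exp (-x)) < δ :=
              htend.eventually (gt_mem_nhds hδ)
            obtain ⟨l₀, hl₀⟩ := Filter.eventually_atTop.mp hev
            obtain ⟨k, hk⟩ : ∃ k, ENNReal.ofReal (max l₀ 1) < μ (A k) := by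
              have : ENNReal.ofReal (max l₀ 1) < ⨆ k, μ (A k) := by
                rw [hiSup]; exact ENNReal.ofReal_lt_top
              exact lt_iSup_iff.mp this
            set l := (μ (A k)).toReal with hldef
            have hml : max l₀ 1 ≤ l := by
              rw [hldef]
              rw [← ENNReal.ofReal_le_iff_le_toReal (hAne k)]
              exact hk.le
            have hl1 : 1 ≤ l := le_trans (le_max_right _ _) hml
            have hll₀ : l₀ ≤ l := le_trans (le_max_left _ _) hml
            have hl0 : (0:ℝ) ≤ l := zero_le_one.trans hl1
            have hsub : {ω | Φ ω Set.univ ≤ (N:ℝ≥0∞)} ⊆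
                ⋃ n ∈ Finset.range (N+1), {ω | Φ ω (A k) = (n:ℝ≥0∞)} := by
              intro ω hω
              have hle : Φ ω (A k) ≤ (N:ℝ≥0∞) :=
                le_trans (measure_mono (subset_univ _)) hω
              obtain ⟨m, hm⟩ := hnat ω (A k) (hAmeas k) (by
                intro hcontra
                rw [hcontra] at hle
                exact absurd (top_le_iff.mp (le_trans le_top hle)) (ENNReal.natCast_ne_top N))
              have hmN : m ≤ N := by
                rw [hm] at hle
                exact_mod_cast hle
              simp only [mem_iUnion, mem_setOf_eq]
              exact ⟨m, Finset.mem_range.mpr (Nat.lt_succ_of_le hmN), hm⟩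
            calc P {ω | Φ ω Set.univ ≤ (N:ℝ≥0∞)}
                ≤ ∑ n ∈ Finset.range (N+1), P {ω | Φ ω (A k) = (n:ℝ≥0∞)} :=
                  (measure_mono hsub).trans (measure_biUnion_finset_le _ _)
            _ ≤ ∑ _n ∈ Finset.range (N+1), ENNReal.ofReal (l ^ N * Real.exp (-l)) := by
                refine Finset.sum_le_sum fun n hn => ?_
                rw [hP.2.1 (A k) (hAmeas k) (hAne k) n]
                apply ENNReal.ofReal_le_ofReal
                have h1 : l ^ n ≤ l ^ N :=
                  pow_le_pow_right₀ hl1 (Nat.lt_succ_iff.mp (Finset.mem_range.mp hn))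
                have h2 : (1:ℝ) ≤ n.factorial := by exact_mod_cast n.factorial_pos
                have h3 : (0:ℝ) < Real.exp (-l) := Real.exp_pos _
                calc Real.exp (-l) * l ^ n / n.factorial ≤ Real.exp (-l) * l ^ n :=
                      div_le_self (by positivity) h2
                _ ≤ Real.exp (-l) * l ^ N := by nlinarith
                _ = l ^ N * Real.exp (-l) := mul_comm _ _
            _ = ENNReal.ofReal ((N:ℝ)+1) * ENNReal.ofReal (l ^ N * Real.exp (-l)) := by
                rw [Finset.sum_const, Finset.card_range, nsmul_eq_mul]
                congr 1
                rw [ENNReal.ofReal_add (by positivity) zero_le_one, ENNReal.ofReal_one,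
                  ENNReal.ofReal_natCast]
                push_cast
                ring
            _ ≤ ENNReal.ofReal δ := by
                rw [← ENNReal.ofReal_mul (by positivity)]
                exact ENNReal.ofReal_le_ofReal (hl₀ l hll₀).le
          by_contra hne0
          set p := P {ω | Φ ω Set.univ ≤ (N:ℝ≥0∞)} with hp
          have hpt : p ≠ ⊤ := (lt_of_le_of_lt prob_le_one one_lt_top).ne
          have hppos : 0 < p.toReal := ENNReal.toReal_pos hne0 hpt
          have hkey := key (p.toReal/2) (by positivity)
          have hlt : ENNReal.ofReal (p.toReal/2) < p := by
            conv_rhs => rw [← ENNReal.ofReal_toReal hpt]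
            exact ENNReal.ofReal_lt_ofReal_iff hppos |>.mpr (by linarith)
          exact absurd hkey (not_le.mpr hlt)
        rw [ae_iff]
        have hsub2 : {ω | ¬ Φ ω Set.univ = ⊤} ⊆
            ⋃ N : ℕ, {ω | Φ ω Set.univ ≤ (N:ℝ≥0∞)} := by
          intro ω hω
          obtain ⟨m, hm⟩ := hnat ω Set.univ MeasurableSet.univ hω
          exact mem_iUnion.mpr ⟨m, le_of_eq hm⟩
        refine le_antisymm ?_ zero_le
        calc P {ω | ¬ Φ ω Set.univ = ⊤}
            ≤ P (⋃ N : ℕ, {ω | Φ ω Set.univ ≤ (N:ℝ≥0∞)}) := measure_mono hsub2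
        _ ≤ ∑' N : ℕ, P {ω | Φ ω Set.univ ≤ (N:ℝ≥0∞)} := measure_iUnion_le _
        _ = 0 := by simp only [hN0, tsum_zero]
      filter_upwards [has, step1] with ω h1 h2
      obtain ⟨c, φ, hrep, hpos, hfin2⟩ := hMp ω
      by_contra hcon
      push_neg at hcon
      have hseq : ∀ k : ℕ, ∃ s, s ∈ K ∧ maxM (Φ ω) s < 1/((k:ℝ)+1) := by
        intro k
        obtain ⟨s, hs1, hs2⟩ := hcon (1/((k:ℝ)+1)) (by positivity)
        exact ⟨s, hs1, by linarith [hs2]⟩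
      choose t htK htlt using hseq
      obtain ⟨ts, htsK, ψ, hψ, hconv⟩ := hK.isCompact.tendsto_subseq htK
      have hatom0 : ∀ n, c n ≠ 0 → φ n ts = 0 := by
        intro n hc
        have hBdd : ∀ s : T, BddAbove ((fun f : C(T, ℝ) => f s) '' atomsOf (Φ ω)) := by
          intro s
          rw [hrep, atoms_eq]
          exact bddAbove_eval c φ (hfin2 1 one_pos) s
        have hle : ∀ k, φ n (t k) ≤ maxM (Φ ω) (t k) := by
          intro k
          apply le_csSup (hBdd (t k))
          refine ⟨φ n, ?_, rfl⟩
          rw [hrep, atoms_eq]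
          exact ⟨n, hc, rfl⟩
        have hlim : Filter.Tendsto (fun j => φ n (t (ψ j))) Filter.atTop (nhds (φ n ts)) :=
          ((φ n).continuous.tendsto ts).comp hconv
        have hub : ∀ j : ℕ, φ n (t (ψ j)) ≤ 1/((j:ℝ)+1) := by
          intro j
          have hψj : ((j:ℝ)+1) ≤ ((ψ j : ℝ)+1) := by
            have hj : j ≤ ψ j := hψ.le_apply
            have : (j:ℝ) ≤ (ψ j : ℝ) := Nat.cast_le.mpr hj
            linarith
          calc φ n (t (ψ j)) ≤ maxM (Φ ω) (t (ψ j)) := hle (ψ j)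
          _ ≤ 1/((ψ j : ℝ)+1) := (htlt (ψ j)).le
          _ ≤ 1/((j:ℝ)+1) := one_div_le_one_div_of_le (by positivity) hψj
        have h0 : Filter.Tendsto (fun j : ℕ => 1/((j:ℝ)+1)) Filter.atTop (nhds 0) :=
          tendsto_one_div_add_atTop_nhds_zero_nat
        have hle0 : φ n ts ≤ 0 := le_of_tendsto_of_tendsto' hlim h0 hub
        have hge0 : (0:ℝ) ≤ φ n ts := by
          have := (hpos n hc).1
          rw [ContinuousMap.le_def] at this
          simpa using this ts
        linarith
      have hη0 : maxM (Φ ω) ts = 0 := by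
        have himg : ((fun f : C(T, ℝ) => f ts) '' atomsOf (Φ ω)) ⊆ {0} := by
          rw [hrep, atoms_eq]
          rintro x ⟨f, ⟨n, hc, rfl⟩, rfl⟩
          exact hatom0 n hc
        rcases Set.subset_singleton_iff_eq.mp himg with h | h
        · rw [maxM, h]
          exact Real.sSup_empty
        · rw [maxM, h]
          exact csSup_singleton 0
      set S' : Set C(T, ℝ) := {f : C(T, ℝ) | 0 ≤ f ts} with hS'
      have hS'meas : MeasurableSet S' := by
        have hev : Continuous fun f : C(T, ℝ) => f ts := continuous_eval_const ts
        exact (isClosed_le continuous_const hev).measurableSet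
      have hS'sub : S' ⊆ {f : C(T, ℝ) | ∃ t' ∈ K, maxM (Φ ω) t' ≤ f t'} := by
        intro f hf
        exact ⟨ts, htsK, by rw [hη0]; exact hf⟩
      have htop : Φ ω S' = ⊤ := by
        rw [hrep, sumDirac_apply c φ hS'meas]
        have hterm : ∀ n, ((if φ n ∈ S' then c n else 0 : ℕ) : ℝ≥0∞) = (c n : ℝ≥0∞) := by
          intro n
          by_cases hc : c n = 0
          · by_cases hφ : φ n ∈ S' <;> simp [hφ, hc]
          · have hmem : φ n ∈ S' := by
              have := (hpos n hc).1
              rw [ContinuousMap.le_def] at this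
              simpa [hS', mem_setOf_eq] using this ts
            simp [hmem]
        simp_rw [hterm]
        have h2' := h2
        rw [hrep, sumDirac_apply c φ MeasurableSet.univ] at h2'
        simpa using h2'
      rw [hΦpS ω] at h1
      have hge : (⊤:ℝ≥0∞) ≤ Φ ω {f : C(T, ℝ) | ∃ t' ∈ K, maxM (Φ ω) t' ≤ f t'} :=
        htop ▸ measure_mono hS'sub
      exact absurd h1 (by simp [top_le_iff.mp hge])
    · exact Or.inl (lt_top_iff_ne_top.mpr hμt)
  · rintro (hfin | ⟨hinf, hae⟩)
    · have hμne : μ Set.univ ≠ ⊤ := hfin.ne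
      have hmeasU : Measurable fun ω => Φ ω Set.univ := hP.1 _ MeasurableSet.univ
      have hEmeas : ∀ n : ℕ, MeasurableSet {ω | Φ ω Set.univ = (n : ℝ≥0∞)} := fun n =>
        hmeasU (measurableSet_singleton _)
      have hdisj : Pairwise (Function.onFun Disjoint
          fun n : ℕ => {ω | Φ ω Set.univ = (n : ℝ≥0∞)}) := by
        intro n m hnm
        simp only [Function.onFun]
        rw [Set.disjoint_left]
        intro ω h1 h2
        exact hnm (by exact_mod_cast (h1 : Φ ω Set.univ = _).symm.trans h2)
      have hsum : P (⋃ n : ℕ, {ω | Φ ω Set.univ = (n : ℝ≥0∞)}) = 1 := by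
        rw [measure_iUnion hdisj hEmeas]
        have heq := fun n : ℕ => hP.2.1 Set.univ MeasurableSet.univ hμne n
        simp_rw [heq]
        exact tsum_poisson _ ENNReal.toReal_nonneg
      have hcompl : P ((⋃ n : ℕ, {ω | Φ ω Set.univ = (n : ℝ≥0∞)})ᶜ) = 0 := by
        rw [measure_compl (MeasurableSet.iUnion hEmeas) (measure_ne_top _ _), hsum,
          measure_univ, tsub_self]
      have hae2 : ∀ᵐ ω ∂P, ω ∈ ⋃ n : ℕ, {ω | Φ ω Set.univ = (n : ℝ≥0∞)} := by
        rw [ae_iff]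
        exact hcompl
      filter_upwards [hae2] with ω hω
      simp only [mem_iUnion, mem_setOf_eq] at hω
      obtain ⟨n, hn⟩ := hω
      rw [hΦpS ω]
      calc Φ ω {f : C(T, ℝ) | ∃ t ∈ K, maxM (Φ ω) t ≤ f t}
          ≤ Φ ω Set.univ := measure_mono (subset_univ _)
      _ < ⊤ := by rw [hn]; exact ENNReal.natCast_lt_top n
    · filter_upwards [hae] with ω hω
      obtain ⟨ε, hε, hεK⟩ := hω
      obtain ⟨c, φ, hrep, hpos, hfin2⟩ := hMp ω
      rw [hΦpS ω]
      set B : Set C(T, ℝ) := {f : C(T, ℝ) | ε/2 < ‖f‖} with hB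
      have hBmeas : MeasurableSet B :=
        (isOpen_lt continuous_const continuous_norm).measurableSet
      have hsub : {f : C(T, ℝ) | ∃ t ∈ K, maxM (Φ ω) t ≤ f t} ⊆ B := by
        rintro f ⟨t, htK, hft⟩
        have h1 : ε ≤ f t := le_trans (hεK t htK) hft
        have h2 : f t ≤ ‖f‖ := by
          calc f t ≤ |f t| := le_abs_self _
          _ = ‖f t‖ := (Real.norm_eq_abs _).symm
          _ ≤ ‖f‖ := f.norm_coe_le_norm t
        simp only [hB, mem_setOf_eq]
        linarith
      refine lt_of_le_of_lt (measure_mono hsub) ?_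
      rw [hrep, sumDirac_apply c φ hBmeas]
      have hfinB := hfin2 (ε/2) (by linarith)
      have hz : ∀ n ∉ hfinB.toFinset, ((if φ n ∈ B then c n else 0 : ℕ) : ℝ≥0∞) = 0 := by
        intro n hn
        by_cases hφ : φ n ∈ B
        · have hc : c n = 0 := by
            by_contra hc
            exact hn (hfinB.mem_toFinset.mpr ⟨hc, hφ⟩)
          simp [hφ, hc]
        · simp [hφ]
      rw [tsum_eq_sum hz]
      exact ENNReal.sum_lt_top.mpr fun n _ => ENNReal.natCast_lt_top _
end
end

section
/- Let μ̄_t : (0,∞) → [0,∞] be a non-increasing, left-continuous function with μ̄_t(0^+) = +∞, and let μ_t be the associated measure with μ_t([x,∞)) = μ̄_t(x). Then ∫_{(0,∞)} exp(−μ̄_t(y)) μ_t(dy) = ∫_0^∞ e^{-x} μ_t(A_x) dx where A_x = {y > 0 : μ̄_t(y) ≤ x}, and this integral equals 1 if and only if μ̄_t is continuous on (0,∞). (In general μ_t(A_x) ≤ x, so the integral is at most 1.) -/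
open MeasureTheory Set ENNReal Filter Topology

noncomputable section

lemma anti8 (μt : Measure ℝ) (μbar : ℝ → ℝ≥0∞) (hμbar : ∀ x, μbar x = μt (Set.Ici x)) :
    Antitone μbar := fun a b hab => by
  rw [hμbar, hμbar]; exact measure_mono (Ici_subset_Ici.2 hab)

lemma left_tendsto (μt : Measure ℝ) (hfin : ∀ ε : ℝ, 0 < ε → μt (Set.Ici ε) ≠ ⊤)
    (μbar : ℝ → ℝ≥0∞) (hμbar : ∀ x, μbar x = μt (Set.Ici x)) {a : ℝ} (ha : 0 < a) :
    Tendsto (fun n : ℕ => μbar (a - a / (n + 2))) atTop (𝓝 (μbar a)) := by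
  have key : Tendsto (fun n : ℕ => μt (Ici (a - a / (n + 2)))) atTop
      (𝓝 (μt (⋂ n : ℕ, Ici (a - a / (n + 2))))) := by
    apply tendsto_measure_iInter_atTop (fun n => measurableSet_Ici.nullMeasurableSet)
    · intro m n hmn
      apply Ici_subset_Ici.2
      have h1 : a / ((n:ℝ) + 2) ≤ a / (m + 2) := by
        have : (m:ℝ) + 2 ≤ (n:ℝ) + 2 := by
          have := (Nat.cast_le (α := ℝ)).2 hmn; linarith
        gcongr
      linarith
    · refine ⟨0, hfin _ ?_⟩
      have : a / ((0:ℕ) + 2) < a := by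
        rw [div_lt_iff₀ (by norm_num)]; nlinarith
      linarith
  have hiInter : (⋂ n : ℕ, Ici (a - a / (n + 2))) = Ici a := by
    ext x
    simp only [mem_iInter, mem_Ici]
    constructor
    · intro h
      by_contra hx
      push_neg at hx
      obtain ⟨n, hn⟩ := exists_nat_gt (a / (a - x))
      have hax : 0 < a - x := by linarith
      have h3 : a / ((n:ℝ) + 2) < a - x := by
        have h5 : a < ((n:ℝ) + 2) * (a - x) := (div_lt_iff₀ hax).1 (by linarith)
        rw [div_lt_iff₀ (by positivity)]
        nlinarith [h5]
      linarith [h n]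
    · intro h n
      have : 0 ≤ a / ((n:ℝ) + 2) := by positivity
      linarith
  rw [hiInter] at key
  simp only [← hμbar] at key
  exact key

lemma left_lb (μt : Measure ℝ) (hfin : ∀ ε : ℝ, 0 < ε → μt (Set.Ici ε) ≠ ⊤)
    (μbar : ℝ → ℝ≥0∞) (hμbar : ∀ x, μbar x = μt (Set.Ici x)) {a : ℝ} (ha : 0 < a)
    {c : ℝ≥0∞} (h : ∀ y, 0 < y → y < a → c ≤ μbar y) : c ≤ μbar a := by
  refine ge_of_tendsto' (left_tendsto μt hfin μbar hμbar ha) fun n => ?_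
  have h1 : 0 < a - a / ((n:ℝ) + 2) := by
    have : a / ((n:ℝ) + 2) < a := by
      rw [div_lt_iff₀ (by positivity)]; nlinarith
    linarith
  have h2 : a - a / ((n:ℝ) + 2) < a := by
    have : 0 < a / ((n:ℝ) + 2) := by positivity
    linarith
  exact h _ h1 h2

lemma right_tendsto (μt : Measure ℝ) (μbar : ℝ → ℝ≥0∞)
    (hμbar : ∀ x, μbar x = μt (Set.Ici x)) (a : ℝ) :
    Tendsto (fun n : ℕ => μbar (a + 1 / (n + 1))) atTop (𝓝 (μt (Ioi a))) := by
  have key : Tendsto (fun n : ℕ => μt (Ici (a + 1 / (n + 1)))) atTop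
      (𝓝 (μt (⋃ n : ℕ, Ici (a + 1 / (n + 1))))) := by
    apply tendsto_measure_iUnion_atTop
    intro m n hmn
    apply Ici_subset_Ici.2
    have : (1:ℝ) / ((n:ℝ) + 1) ≤ 1 / (m + 1) := by
      have : (m:ℝ) + 1 ≤ (n:ℝ) + 1 := by
        have := (Nat.cast_le (α := ℝ)).2 hmn; linarith
      gcongr
    linarith
  have hiUnion : (⋃ n : ℕ, Ici (a + 1 / (n + 1))) = Ioi a := by
    ext x
    simp only [mem_iUnion, mem_Ici, mem_Ioi]
    constructor
    · rintro ⟨n, hn⟩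
      have : (0:ℝ) < 1 / ((n:ℝ) + 1) := by positivity
      linarith
    · intro hx
      obtain ⟨n, hn⟩ := exists_nat_one_div_lt (show (0:ℝ) < x - a by linarith)
      exact ⟨n, by push_cast at hn ⊢; linarith⟩
  rw [hiUnion] at key
  simp only [← hμbar] at key
  exact key

lemma tail_zero (μt : Measure ℝ) (hfin : ∀ ε : ℝ, 0 < ε → μt (Set.Ici ε) ≠ ⊤)
    (μbar : ℝ → ℝ≥0∞) (hμbar : ∀ x, μbar x = μt (Set.Ici x)) :
    Tendsto (fun n : ℕ => μbar ((n:ℝ) + 1)) atTop (𝓝 0) := by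
  have key : Tendsto (fun n : ℕ => μt (Ici ((n:ℝ) + 1))) atTop
      (𝓝 (μt (⋂ n : ℕ, Ici ((n:ℝ) + 1)))) := by
    apply tendsto_measure_iInter_atTop (fun n => measurableSet_Ici.nullMeasurableSet)
    · intro m n hmn
      apply Ici_subset_Ici.2
      have := (Nat.cast_le (α := ℝ)).2 hmn; linarith
    · exact ⟨0, hfin _ (by norm_num)⟩
  have hiInter : (⋂ n : ℕ, Ici ((n:ℝ) + 1)) = ∅ := by
    ext x
    simp only [mem_iInter, mem_Ici, mem_empty_iff_false, iff_false]
    push_neg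
    obtain ⟨n, hn⟩ := exists_nat_gt x
    exact ⟨n, by linarith⟩
  rw [hiInter, measure_empty] at key
  simp only [← hμbar] at key
  exact key

lemma S_cases (μt : Measure ℝ) (hs : μt (Set.Iic 0) = 0)
    (hfin : ∀ ε : ℝ, 0 < ε → μt (Set.Ici ε) ≠ ⊤)
    (μbar : ℝ → ℝ≥0∞) (hμbar : ∀ x, μbar x = μt (Set.Ici x))
    (hinf : Filter.Tendsto μbar (nhdsWithin 0 (Set.Ioi 0)) (nhds ⊤))
    {x : ℝ} (hx : 0 < x) :
    μt {y : ℝ | 0 < y ∧ μbar y ≤ ENNReal.ofReal x} ≤ ENNReal.ofReal x ∧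
    ((∀ y : ℝ, 0 < y → μt {y} = 0) →
      μt {y : ℝ | 0 < y ∧ μbar y ≤ ENNReal.ofReal x} = ENNReal.ofReal x) := by
  have hanti := anti8 μt μbar hμbar
  set S : Set ℝ := {y : ℝ | 0 < y ∧ μbar y ≤ ENNReal.ofReal x} with hS
  have hxpos : (0:ℝ≥0∞) < ENNReal.ofReal x := ENNReal.ofReal_pos.2 hx
  -- nonempty
  have hne : S.Nonempty := by
    have := (tail_zero μt hfin μbar hμbar).eventually_lt_const hxpos
    obtain ⟨n, hn⟩ := this.exists
    exact ⟨(n:ℝ) + 1, by positivity, hn.le⟩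
  -- positive lower bound
  obtain ⟨ε, hε, hεlb⟩ : ∃ ε > 0, ∀ y ∈ S, ε ≤ y := by
    have hev : ∀ᶠ y in nhdsWithin 0 (Set.Ioi 0), ENNReal.ofReal x < μbar y :=
      hinf.eventually_const_lt (by simp [lt_top_iff_ne_top])
    rw [eventually_nhdsWithin_iff, Metric.eventually_nhds_iff] at hev
    obtain ⟨ε, hε, h⟩ := hev
    refine ⟨ε, hε, fun y hy => ?_⟩
    by_contra hc
    push_neg at hc
    have := h (show dist y 0 < ε by rw [Real.dist_eq, sub_zero, abs_of_pos hy.1]; exact hc) hy.1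
    exact absurd hy.2 (not_le.2 this)
  -- infimum
  set a := sInf S with haS
  have hbdd : BddBelow S := ⟨ε, fun y hy => hεlb y hy⟩
  have hapos : 0 < a := lt_of_lt_of_le hε (le_csInf hne hεlb)
  have hup : ∀ y ∈ S, ∀ z, y ≤ z → z ∈ S := by
    intro y hy z hz
    exact ⟨lt_of_lt_of_le hy.1 hz, le_trans (hanti hz) hy.2⟩
  by_cases haS' : a ∈ S
  · -- S = Ici a, μbar a = ofReal x
    have hSeq : S = Ici a := by
      apply Subset.antisymm (fun y hy => csInf_le hbdd hy)
      intro y hy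
      exact hup a haS' y hy
    have h1 : μbar a ≤ ENNReal.ofReal x := haS'.2
    have h2 : ENNReal.ofReal x ≤ μbar a := by
      apply left_lb μt hfin μbar hμbar hapos
      intro y hy hya
      by_contra hc
      push_neg at hc
      have : y ∈ S := ⟨hy, hc.le⟩
      exact absurd (csInf_le hbdd this) (not_le.2 hya)
    have : μt S = ENNReal.ofReal x := by
      rw [hSeq, ← hμbar, le_antisymm h1 h2]
    exact ⟨this.le, fun _ => this⟩
  · -- S = Ioi a
    have hSeq : S = Ioi a := by
      apply Subset.antisymm
      · intro y hy
        exact lt_of_le_of_ne (csInf_le hbdd hy) (by rintro rfl; exact haS' hy)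
      · intro y hy
        obtain ⟨z, hz, hzy⟩ := (csInf_lt_iff hbdd hne).1 hy
        exact hup z hz y hzy.le
    have hle : μt S ≤ ENNReal.ofReal x := by
      rw [hSeq]
      refine le_of_tendsto' (right_tendsto μt μbar hμbar a) fun n => ?_
      have hmem : a + 1 / ((n:ℝ) + 1) ∈ S := by
        rw [hSeq]; simp only [mem_Ioi]; linarith [show (0:ℝ) < 1/((n:ℝ)+1) by positivity]
      exact hmem.2
    refine ⟨hle, fun hna => absurd ?_ haS'⟩
    -- no atoms: a ∈ S, contradiction
    have h3 : μbar a ≤ μt (Ioi a) := by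
      rw [hμbar]
      calc μt (Ici a) ≤ μt (Ioi a ∪ {a}) := measure_mono (by
            intro y hy
            rcases eq_or_lt_of_le (mem_Ici.1 hy) with h | h
            · exact Or.inr (by simp [h.symm])
            · exact Or.inl h)
      _ ≤ μt (Ioi a) + μt {a} := measure_union_le _ _
      _ = μt (Ioi a) := by rw [hna a hapos, add_zero]
    exact ⟨hapos, h3.trans (hSeq ▸ hle)⟩

lemma not_cont (μt : Measure ℝ) (hfin : ∀ ε : ℝ, 0 < ε → μt (Set.Ici ε) ≠ ⊤)
    (μbar : ℝ → ℝ≥0∞) (hμbar : ∀ x, μbar x = μt (Set.Ici x))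
    {y0 : ℝ} (hy0 : 0 < y0) (hat : μt {y0} ≠ 0) :
    ¬ ContinuousOn μbar (Set.Ioi 0) := by
  intro hc
  have h1 : Tendsto μbar (𝓝[>] y0) (𝓝 (μbar y0)) :=
    (hc y0 hy0).tendsto.mono_left (nhdsWithin_mono _ (Ioi_subset_Ioi hy0.le))
  have h2 : ∀ᶠ y in 𝓝[>] y0, μbar y ≤ μt (Ioi y0) := by
    apply eventually_nhdsWithin_of_forall
    intro y hy
    rw [hμbar]
    exact measure_mono (fun z hz => lt_of_lt_of_le hy (mem_Ici.1 hz))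
  have h3 : μbar y0 ≤ μt (Ioi y0) := le_of_tendsto h1 h2
  have h4 : μt (Ioi y0) < μbar y0 := by
    have hioi : μt (Ioi y0) ≠ ⊤ :=
      fun h => hfin y0 hy0 (top_le_iff.1 (h ▸ (measure_mono Ioi_subset_Ici_self : μt (Ioi y0) ≤ μt (Ici y0))))
    have hunion : μt (Ici y0) = μt (Ioi y0) + μt {y0} := by
      rw [← measure_union (by simp [Set.disjoint_left]; exact fun a ha => ne_of_gt ha) (measurableSet_singleton y0)]
      congr 1
      rw [Set.Ioi_union_left]
    rw [hμbar, hunion]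
    exact ENNReal.lt_add_right hioi hat
  exact absurd h3 (not_le.2 h4)


lemma cont_of (μt : Measure ℝ) (hfin : ∀ ε : ℝ, 0 < ε → μt (Set.Ici ε) ≠ ⊤)
    (μbar : ℝ → ℝ≥0∞) (hμbar : ∀ x, μbar x = μt (Set.Ici x))
    (hna : ∀ y : ℝ, 0 < y → μt {y} = 0) : ContinuousOn μbar (Set.Ioi 0) := by
  have hanti := anti8 μt μbar hμbar
  intro y0 hy0
  rw [mem_Ioi] at hy0
  apply ContinuousAt.continuousWithinAt
  have hLtop : μbar y0 ≠ ⊤ := by rw [hμbar]; exact hfin y0 hy0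
  rw [ContinuousAt, ENNReal.tendsto_nhds hLtop]
  intro ε hε
  set L := μbar y0 with hL
  -- upper bound point
  obtain ⟨y1, hy1a, hy1b, hy1c⟩ : ∃ y1, 0 < y1 ∧ y1 < y0 ∧ μbar y1 ≤ L + ε := by
    have hlt : L < L + ε := ENNReal.lt_add_right hLtop hε.ne'
    obtain ⟨n, hn⟩ := ((left_tendsto μt hfin μbar hμbar hy0).eventually_lt_const hlt).exists
    refine ⟨y0 - y0 / ((n:ℝ) + 2), ?_, ?_, hn.le⟩
    · have : y0 / ((n:ℝ) + 2) < y0 := by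
        rw [div_lt_iff₀ (by positivity)]; nlinarith
      linarith
    · have : 0 < y0 / ((n:ℝ) + 2) := by positivity
      linarith
  -- lower bound point
  obtain ⟨y2, hy2a, hy2c⟩ : ∃ y2, y0 < y2 ∧ L - ε ≤ μbar y2 := by
    rcases le_or_gt L ε with h | h
    · exact ⟨y0 + 1, by linarith, by simp [tsub_eq_zero_of_le h]⟩
    · have hIoi : μt (Ioi y0) = L := by
        apply le_antisymm
        · rw [hL, hμbar]; exact measure_mono Ioi_subset_Ici_self
        rw [hL, hμbar]
        calc μt (Ici y0) ≤ μt (Ioi y0 ∪ {y0}) := measure_mono (by rw [Set.Ioi_union_left])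
        _ ≤ μt (Ioi y0) + μt {y0} := measure_union_le _ _
        _ = μt (Ioi y0) := by rw [hna y0 hy0, add_zero]
      have hlt : L - ε < L := by
        apply ENNReal.sub_lt_self hLtop
        · intro h0; rw [h0] at h; exact absurd h (by simp)
        · exact hε.ne'
      rw [show L - ε = μt (Ioi y0) - ε by rw [hIoi], ← hIoi] at hlt
      obtain ⟨n, hn⟩ := ((right_tendsto μt μbar hμbar y0).eventually_const_lt hlt).exists
      refine ⟨y0 + 1 / ((n:ℝ) + 1), by
        have : (0:ℝ) < 1 / ((n:ℝ)+1) := by positivity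
        linarith, by rw [show L - ε = μt (Ioi y0) - ε by rw [hIoi]]; exact hn.le⟩
  filter_upwards [Icc_mem_nhds hy1b hy2a] with y hy
  constructor
  · exact le_trans hy2c (hanti hy.2)
  · exact le_trans (hanti hy.1) hy1c



lemma inner_calc (c : ℝ≥0∞) :
    (∫⁻ x in Set.Ioi (0:ℝ),
      ENNReal.ofReal (Real.exp (-x)) * ({x' : ℝ | c ≤ ENNReal.ofReal x'}.indicator (fun _ => (1:ℝ≥0∞)) x)) = Eexp c := by
  rcases eq_or_ne c ⊤ with hc | hc
  · have hempty : {x' : ℝ | c ≤ ENNReal.ofReal x'} = ∅ := by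
      ext x'; simp [hc]
    simp [hempty, Eexp, hc]
  · set S := {x' : ℝ | c ≤ ENNReal.ofReal x'} with hSdef
    have hSmeas : MeasurableSet S := measurableSet_le measurable_const ENNReal.measurable_ofReal
    set r := c.toReal with hr
    have hr0 : 0 ≤ r := ENNReal.toReal_nonneg
    have step1 : ∀ x : ℝ, ENNReal.ofReal (Real.exp (-x)) * S.indicator (fun _ => (1:ℝ≥0∞)) x
        = S.indicator (fun x => ENNReal.ofReal (Real.exp (-x))) x := by
      intro x
      by_cases hx : x ∈ S <;> simp [Set.indicator_apply, hx]
    rw [lintegral_congr step1, lintegral_indicator hSmeas, Measure.restrict_restrict hSmeas]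
    have hset : S ∩ Ioi 0 = Ici r ∩ Ioi 0 := by
      ext x
      simp only [hSdef, mem_inter_iff, mem_setOf_eq, mem_Ici, mem_Ioi]
      constructor
      · rintro ⟨h1, h2⟩
        exact ⟨(ENNReal.le_ofReal_iff_toReal_le hc h2.le).1 h1, h2⟩
      · rintro ⟨h1, h2⟩
        exact ⟨(ENNReal.le_ofReal_iff_toReal_le hc h2.le).2 h1, h2⟩
    rw [hset]
    have hae : (Ici r ∩ Ioi 0 : Set ℝ) =ᵐ[volume] (Ioi r : Set ℝ) := by
      rw [MeasureTheory.ae_eq_set]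
      constructor
      · apply measure_mono_null (show (Ici r ∩ Ioi 0) \ Ioi r ⊆ {r} from ?_) Real.volume_singleton
        rintro z ⟨⟨hz1, _⟩, hz3⟩
        simp only [mem_Ioi, not_lt] at hz3
        exact le_antisymm hz3 hz1
      · apply measure_mono_null (show Ioi r \ (Ici r ∩ Ioi 0) ⊆ (∅ : Set ℝ) from ?_) measure_empty
        rintro z ⟨hz1, hz2⟩
        exact hz2 ⟨mem_Ici.2 (le_of_lt (mem_Ioi.1 hz1)), lt_of_le_of_lt hr0 (mem_Ioi.1 hz1)⟩
    rw [setLIntegral_congr hae]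
    have hint : IntegrableOn (fun x => Real.exp (-x)) (Ioi r) volume := by
      have := exp_neg_integrableOn_Ioi r (show (0:ℝ) < 1 by norm_num)
      simpa using this
    rw [← ofReal_integral_eq_lintegral_ofReal hint
      (ae_of_all _ fun x => (Real.exp_pos _).le), integral_exp_neg_Ioi]
    simp [Eexp, hc]
    rfl

lemma gamma_one : ∫⁻ x in Set.Ioi (0:ℝ), ENNReal.ofReal (Real.exp (-x)) * ENNReal.ofReal x = 1 := by
  have hint := Real.GammaIntegral_convergent (show (0:ℝ) < 2 by norm_num)
  have hgam := Real.Gamma_eq_integral (show (0:ℝ) < 2 by norm_num)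
  have h2 : Real.Gamma 2 = 1 := by
    have h := Real.Gamma_nat_eq_factorial 1
    norm_num at h
    convert h using 2
    norm_num
  calc ∫⁻ x in Ioi (0:ℝ), ENNReal.ofReal (Real.exp (-x)) * ENNReal.ofReal x
      = ∫⁻ x in Ioi (0:ℝ), ENNReal.ofReal (Real.exp (-x) * x ^ ((2:ℝ) - 1)) := by
        apply setLIntegral_congr_fun measurableSet_Ioi
        intro x hx
        beta_reduce
        rw [show ((2:ℝ)-1) = 1 by norm_num, Real.rpow_one,
          ENNReal.ofReal_mul (Real.exp_pos _).le]
      _ = ENNReal.ofReal (∫ x in Ioi (0:ℝ), Real.exp (-x) * x ^ ((2:ℝ)-1)) := by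
        rw [ofReal_integral_eq_lintegral_ofReal hint]
        exact (ae_restrict_iff' measurableSet_Ioi).2 (ae_of_all _ fun x hx =>
          mul_nonneg (Real.exp_pos _).le (Real.rpow_nonneg (le_of_lt hx) _))
      _ = 1 := by rw [← hgam, h2, ENNReal.ofReal_one]

lemma sf8 (μt : Measure ℝ) (hs : μt (Set.Iic 0) = 0)
    (hfin : ∀ ε : ℝ, 0 < ε → μt (Set.Ici ε) ≠ ⊤) : SigmaFinite μt := by
  refine ⟨⟨⟨fun n => Iic 0 ∪ Ici (1/(n+1)), fun _ => trivial, fun n => ?_, ?_⟩⟩⟩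
  · apply lt_of_le_of_lt (measure_union_le _ _)
    rw [hs, zero_add]
    exact (hfin _ (by positivity)).lt_top
  · ext x
    simp only [mem_iUnion, mem_univ, iff_true, mem_union, mem_Iic, mem_Ici]
    rcases le_or_gt x 0 with h | h
    · exact ⟨0, Or.inl h⟩
    · obtain ⟨n, hn⟩ := exists_nat_one_div_lt h
      exact ⟨n, Or.inr (by push_cast at hn ⊢; linarith)⟩

/-- for a measure `μ_t` on `(0,∞)`, finite on `[ε,∞)` for all `ε > 0`,
with tail `μ̄_t(x) = μ_t([x,∞))` satisfying `μ̄_t(0⁺) = ∞`,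
`∫_{(0,∞)} exp(−μ̄_t(y)) μ_t(dy) = ∫_0^∞ e^{−x} μ_t(A_x) dx` with
`A_x = {y > 0 : μ̄_t(y) ≤ x}`; moreover `μ_t(A_x) ≤ x` always, and the integral equals
`1` iff `μ̄_t` is continuous on `(0,∞)`. -/
theorem tail_integral_identity
    (μt : Measure ℝ) (hs : μt (Set.Iic 0) = 0)
    (hfin : ∀ ε : ℝ, 0 < ε → μt (Set.Ici ε) ≠ ⊤)
    (μbar : ℝ → ℝ≥0∞) (hμbar : ∀ x, μbar x = μt (Set.Ici x))
    (hinf : Filter.Tendsto μbar (nhdsWithin 0 (Set.Ioi 0)) (nhds ⊤)) :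
    (∫⁻ y in Set.Ioi (0 : ℝ), Eexp (μbar y) ∂μt =
       ∫⁻ x in Set.Ioi (0 : ℝ),
         ENNReal.ofReal (Real.exp (-x)) *
           μt {y : ℝ | 0 < y ∧ μbar y ≤ ENNReal.ofReal x}) ∧
    (∀ x : ℝ, 0 < x → μt {y : ℝ | 0 < y ∧ μbar y ≤ ENNReal.ofReal x} ≤ ENNReal.ofReal x) ∧
    ((∫⁻ y in Set.Ioi (0 : ℝ), Eexp (μbar y) ∂μt = 1) ↔
      ContinuousOn μbar (Set.Ioi 0)) := by
  have hanti := anti8 μt μbar hμbar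
  have hmeas : Measurable μbar := hanti.measurable
  haveI : SigmaFinite μt := sf8 μt hs hfin
  set F : ℝ → ℝ≥0∞ := fun x => μt {y : ℝ | 0 < y ∧ μbar y ≤ ENNReal.ofReal x} with hF
  have hFmono : Monotone F := by
    intro x1 x2 h
    apply measure_mono
    intro y hy
    exact ⟨hy.1, hy.2.trans (ENNReal.ofReal_le_ofReal h)⟩
  have hFmeas : Measurable F := hFmono.measurable
  have part2 : ∀ x : ℝ, 0 < x → F x ≤ ENNReal.ofReal x :=
    fun x hx => (S_cases μt hs hfin μbar hμbar hinf hx).1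
  -- Part 1 : Tonelli
  set D : Set (ℝ × ℝ) := {p : ℝ × ℝ | μbar p.1 ≤ ENNReal.ofReal p.2} with hD
  have hDmeas : MeasurableSet D :=
    measurableSet_le (hmeas.comp measurable_fst) (ENNReal.measurable_ofReal.comp measurable_snd)
  set f : ℝ → ℝ → ℝ≥0∞ :=
    fun y x => ENNReal.ofReal (Real.exp (-x)) * D.indicator (fun _ => 1) (y, x) with hf
  have hfmeas : Measurable (Function.uncurry f) := by
    have h1 : Function.uncurry f =
        fun p : ℝ × ℝ => ENNReal.ofReal (Real.exp (-p.2)) * D.indicator (fun _ => 1) p := by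
      funext p
      simp [Function.uncurry, hf]
    rw [h1]
    exact ((Real.continuous_exp.measurable.comp measurable_snd.neg).ennreal_ofReal).mul
      (measurable_const.indicator hDmeas)
  have part1 : ∫⁻ y in Set.Ioi (0:ℝ), Eexp (μbar y) ∂μt =
      ∫⁻ x in Set.Ioi (0:ℝ), ENNReal.ofReal (Real.exp (-x)) * F x := by
    have hL : ∫⁻ y in Set.Ioi (0:ℝ), Eexp (μbar y) ∂μt =
        ∫⁻ y in Set.Ioi (0:ℝ), (∫⁻ x in Set.Ioi (0:ℝ), f y x) ∂μt := by
      refine lintegral_congr fun y => ?_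
      rw [← inner_calc (μbar y)]
      refine (lintegral_congr fun x => ?_).symm
      by_cases h : μbar y ≤ ENNReal.ofReal x <;> simp [hf, Set.indicator_apply, hD, h]
    have hswap := lintegral_lintegral_swap
      (μ := μt.restrict (Set.Ioi 0)) (ν := volume.restrict (Set.Ioi 0)) hfmeas.aemeasurable
    have hR : ∀ x : ℝ, (∫⁻ y in Set.Ioi (0:ℝ), f y x ∂μt) =
        ENNReal.ofReal (Real.exp (-x)) * F x := by
      intro x
      have hBmeas : MeasurableSet {y : ℝ | μbar y ≤ ENNReal.ofReal x} :=
        measurableSet_le hmeas measurable_const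
      have hind : ∀ y : ℝ, D.indicator (fun _ => (1:ℝ≥0∞)) (y, x) =
          {y : ℝ | μbar y ≤ ENNReal.ofReal x}.indicator (fun _ => (1:ℝ≥0∞)) y := by
        intro y
        by_cases h : μbar y ≤ ENNReal.ofReal x <;> simp [Set.indicator_apply, hD, h]
      calc ∫⁻ y in Set.Ioi (0:ℝ), f y x ∂μt
          = ∫⁻ y in Set.Ioi (0:ℝ), ENNReal.ofReal (Real.exp (-x)) *
              {y : ℝ | μbar y ≤ ENNReal.ofReal x}.indicator (fun _ => (1:ℝ≥0∞)) y ∂μt := by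
            refine lintegral_congr fun y => ?_
            rw [hf]
            simp only []
            rw [hind y]
        _ = ENNReal.ofReal (Real.exp (-x)) *
              ∫⁻ y in Set.Ioi (0:ℝ), {y : ℝ | μbar y ≤ ENNReal.ofReal x}.indicator (fun _ => (1:ℝ≥0∞)) y ∂μt :=
            lintegral_const_mul _ (measurable_const.indicator hBmeas)
        _ = ENNReal.ofReal (Real.exp (-x)) * F x := by
            rw [lintegral_indicator hBmeas, Measure.restrict_restrict hBmeas, setLIntegral_one]
            congr 1
            rw [hF]
            congr 1
            ext y
            simp only [Set.mem_inter_iff, Set.mem_setOf_eq, Set.mem_Ioi]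
            tauto
    rw [hL, hswap]
    exact lintegral_congr fun x => hR x
  refine ⟨part1, part2, ?_⟩
  constructor
  · -- integral = 1 → continuous
    intro h1
    by_contra hnc
    have hatom : ∃ y0 : ℝ, 0 < y0 ∧ μt {y0} ≠ 0 := by
      by_contra h
      push_neg at h
      exact hnc (cont_of μt hfin μbar hμbar h)
    obtain ⟨y0, hy0, hat⟩ := hatom
    set b := μt (Set.Ioi y0) with hb
    have hbtop : b ≠ ⊤ :=
      fun h => hfin y0 hy0 (top_le_iff.1 (h ▸ (measure_mono Ioi_subset_Ici_self : b ≤ μt (Set.Ici y0))))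
    have hBtop : μbar y0 ≠ ⊤ := by rw [hμbar]; exact hfin y0 hy0
    have hbB : b < μbar y0 := by
      rw [hμbar]
      have hunion : μt (Set.Ici y0) = μt (Set.Ioi y0) + μt {y0} := by
        rw [← measure_union (by simp [Set.disjoint_left]; exact fun a ha => ne_of_gt ha)
          (measurableSet_singleton y0)]
        congr 1
        rw [Set.Ioi_union_left]
      rw [hunion]
      exact ENNReal.lt_add_right hbtop hat
    have hJlt : b.toReal < (μbar y0).toReal := (ENNReal.toReal_lt_toReal hbtop hBtop).2 hbB
    set J := Set.Ioo b.toReal (μbar y0).toReal with hJ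
    have hbr0 : 0 ≤ b.toReal := ENNReal.toReal_nonneg
    have hJsub : J ⊆ Set.Ioi (0:ℝ) := fun x hx => lt_of_le_of_lt hbr0 hx.1
    have hFJ : ∀ x ∈ J, F x = b ∧ b < ENNReal.ofReal x := by
      intro x hx
      have hx1 : b < ENNReal.ofReal x := (ENNReal.lt_ofReal_iff_toReal_lt hbtop).2 hx.1
      have hx2 : ENNReal.ofReal x < μbar y0 := by
        rw [← ENNReal.ofReal_toReal hBtop]
        exact (ENNReal.ofReal_lt_ofReal_iff (lt_of_le_of_lt hbr0 hJlt)).2 hx.2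
      refine ⟨?_, hx1⟩
      have hSeq : {y : ℝ | 0 < y ∧ μbar y ≤ ENNReal.ofReal x} = Set.Ioi y0 := by
        ext y
        simp only [Set.mem_setOf_eq, Set.mem_Ioi]
        constructor
        · rintro ⟨hy, hle⟩
          by_contra hcc
          push_neg at hcc
          exact absurd ((hanti hcc).trans hle) (not_le.2 hx2)
        · intro hy
          refine ⟨lt_trans hy0 hy, ?_⟩
          rw [hμbar]
          exact le_trans (measure_mono (fun z hz => lt_of_lt_of_le hy hz)) hx1.le
      rw [hF]
      simp only []
      rw [hSeq, ← hb]
    set g : ℝ → ℝ≥0∞ := fun x => ENNReal.ofReal (Real.exp (-x)) * F x with hg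
    set G : ℝ → ℝ≥0∞ := fun x => ENNReal.ofReal (Real.exp (-x)) * ENNReal.ofReal x with hG
    have hexpm : Measurable fun x : ℝ => ENNReal.ofReal (Real.exp (-x)) :=
      (Real.continuous_exp.measurable.comp measurable_neg).ennreal_ofReal
    have hgmeas : Measurable g := hexpm.mul hFmeas
    have hGmeas : Measurable G := hexpm.mul ENNReal.measurable_ofReal
    have hle' : g ≤ᵐ[volume.restrict (Set.Ioi 0)] G :=
      (ae_restrict_iff' measurableSet_Ioi).2 (ae_of_all _ fun x hx =>
        mul_le_mul_right (part2 x hx) _)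
    have hIg : ∫⁻ x in Set.Ioi (0:ℝ), g x = 1 := by rw [← part1]; exact h1
    have hsub : ∫⁻ x in Set.Ioi (0:ℝ), (G x - g x) = 0 := by
      rw [lintegral_sub hgmeas (by rw [hIg]; exact ENNReal.one_ne_top) hle']
      rw [hIg]
      have : ∫⁻ x in Set.Ioi (0:ℝ), G x = 1 := gamma_one
      rw [this, tsub_self]
    have hae0 : (fun x => G x - g x) =ᵐ[volume.restrict (Set.Ioi 0)] 0 :=
      (lintegral_eq_zero_iff (hGmeas.sub hgmeas)).1 hsub
    have hJ0 : volume.restrict (Set.Ioi 0) J = 0 := by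
      rw [Filter.EventuallyEq, Filter.eventually_iff, mem_ae_iff] at hae0
      apply measure_mono_null _ hae0
      intro x hx
      simp only [Set.mem_compl_iff, Set.mem_setOf_eq]
      obtain ⟨hFx, hbx⟩ := hFJ x hx
      have hglt : g x < G x := by
        rw [hg, hG]
        simp only []
        rw [hFx]
        exact (ENNReal.mul_lt_mul_iff_right (by positivity) ENNReal.ofReal_ne_top).2 hbx
      intro hcon
      have : G x ≤ g x := tsub_eq_zero_iff_le.1 hcon
      exact absurd this (not_le.2 hglt)
    rw [Measure.restrict_apply' measurableSet_Ioi, Set.inter_eq_left.2 hJsub] at hJ0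
    rw [hJ, Real.volume_Ioo] at hJ0
    exact absurd hJ0 (by
      simp only [ENNReal.ofReal_eq_zero, not_le]
      linarith)
  · -- continuous → integral = 1
    intro hc
    have hna : ∀ y : ℝ, 0 < y → μt {y} = 0 := by
      intro y hy
      by_contra h
      exact not_cont μt hfin μbar hμbar hy h hc
    rw [part1]
    have : ∫⁻ x in Set.Ioi (0:ℝ), ENNReal.ofReal (Real.exp (-x)) * F x =
        ∫⁻ x in Set.Ioi (0:ℝ), ENNReal.ofReal (Real.exp (-x)) * ENNReal.ofReal x := by
      apply setLIntegral_congr_fun measurableSet_Ioi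
      intro x hx
      rw [hF]
      simp only []
      rw [(S_cases μt hs hfin μbar hμbar hinf hx).2 hna]
    rw [this]
    exact gamma_one
end
end

section
/- Let η be a continuous simple max-stable random field with spectral measure σ (so the exponent measure is μ(A) = ∫_0^∞ σ({f : rf ∈ A}) r^{-2} dr and ∫ f(t) σ(df) = 1 for all t). Then for any t ∈ T and any measurable A ⊆ C_0 and Borel B ⊆ (0,∞): ∫_B ∫_{C_0} 1{(y/f(t)) f ∈ A} f(t) σ(df) μ_t(dy) = μ({f ∈ A : f(t) ∈ B}), where μ_t(dy) = y^{-2} 1{y>0} dy. Consequently the conditional kernel of μ given f(t) = y is P_t(y, A) = ∫_{C_0} 1{(y/f(t)) f ∈ A} f(t) σ(df). -/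
open MeasureTheory Set ENNReal

noncomputable section

lemma scale_lintegral (c : ℝ) (hc : 0 < c) {g : ℝ → ℝ≥0∞} (hg : Measurable g) :
    ∫⁻ y in Set.Ioi (0:ℝ), g y = ENNReal.ofReal c * ∫⁻ r in Set.Ioi (0:ℝ), g (c * r) := by
  have hc' : c ≠ 0 := hc.ne'
  have hmap : (ENNReal.ofReal |c|) • Measure.map (c * ·) volume = volume :=
    Real.smul_map_volume_mul_left hc'
  have hpre : ((c * ·) ⁻¹' Set.Ioi (0:ℝ)) = Set.Ioi 0 := by
    ext x; simp [Set.mem_Ioi, mul_pos_iff_of_pos_left, hc]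
  calc ∫⁻ y in Set.Ioi (0:ℝ), g y
      = ∫⁻ y in Set.Ioi (0:ℝ), g y ∂((ENNReal.ofReal |c|) • Measure.map (c * ·) volume) := by
        rw [hmap]
    _ = ENNReal.ofReal |c| * ∫⁻ y in Set.Ioi (0:ℝ), g y ∂(Measure.map (c * ·) volume) := by
        rw [Measure.restrict_smul, lintegral_smul_measure, smul_eq_mul]
    _ = ENNReal.ofReal c * ∫⁻ r in Set.Ioi (0:ℝ), g (c * r) := by
        rw [setLIntegral_map measurableSet_Ioi hg (measurable_const_mul c), hpre,
          abs_of_pos hc]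


set_option maxHeartbeats 1000000 in
set_option synthInstance.maxHeartbeats 1000000 in
/-- Proposition 4.2, kernel identity: for a simple max-stable exponent
measure `μ(A) = ∫_0^∞ σ{f : r f ∈ A} r^{-2} dr`,
`∫_B ∫ 1{(y/f(t)) f ∈ A} f(t) σ(df) μ_t(dy) = μ({f ∈ A : f(t) ∈ B})` with
`μ_t(dy) = y^{-2} 1{y>0} dy`; hence `P_t(y,A) = ∫ 1{(y/f(t)) f ∈ A} f(t) σ(df)` is the
conditional kernel of `μ` given `f(t) = y`. -/
theorem maxstable_kernel {T : Type*} [MetricSpace T] [CompactSpace T]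
    [MeasurableSpace C(T, ℝ)] [BorelSpace C(T, ℝ)]
    (σ : Measure C(T, ℝ)) [IsProbabilityMeasure σ]
    (hσ0 : ∀ᵐ f ∂σ, 0 ≤ f ∧ f ≠ 0)
    (hσ1 : ∀ s : T, ∫⁻ f, ENNReal.ofReal (f s) ∂σ = 1)
    (hσn : ∫⁻ f, ENNReal.ofReal ‖f‖ ∂σ ≠ ⊤)
    (μ : Measure C(T, ℝ))
    (hμdef : ∀ A : Set C(T, ℝ), MeasurableSet A →
      μ A = ∫⁻ r in Set.Ioi (0 : ℝ), σ {f : C(T, ℝ) | r • f ∈ A} *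
        ENNReal.ofReal (r ^ 2)⁻¹)
    (t : T) (hσt : σ {f : C(T, ℝ) | f t = 0} = 0)
    (Pt : ℝ → Set C(T, ℝ) → ℝ≥0∞)
    (hPt : ∀ y A, Pt y A =
      ∫⁻ f, A.indicator 1 ((y / f t) • f) * ENNReal.ofReal (f t) ∂σ) :
    ∀ A : Set C(T, ℝ), MeasurableSet A →
    ∀ B : Set ℝ, MeasurableSet B → B ⊆ Set.Ioi 0 →
      ∫⁻ y in B, Pt y A
          ∂((volume.restrict (Set.Ioi (0 : ℝ))).withDensity
              fun y => ENNReal.ofReal (y ^ 2)⁻¹) =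
        μ (A ∩ {f : C(T, ℝ) | f t ∈ B}) := by
  haveI hsf : SFinite σ := inferInstance
  intro A hA B hB hBsub
  -- basic measurability
  have hev : Measurable fun f : C(T, ℝ) => f t :=
    (ContinuousEvalConst.continuous_eval_const t).measurable
  have hsm : Measurable fun p : ℝ × C(T, ℝ) => p.1 • p.2 := continuous_smul.measurable
  have hindA : Measurable (A.indicator (1 : C(T, ℝ) → ℝ≥0∞)) := measurable_one.indicator hA
  have hindB : Measurable (B.indicator (1 : ℝ → ℝ≥0∞)) := measurable_one.indicator hB
  have hBne : ∀ y, B.indicator (1 : ℝ → ℝ≥0∞) y ≠ ⊤ := by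
    intro y; by_cases h : y ∈ B <;> simp [h]
  have hw : Measurable fun y : ℝ => ENNReal.ofReal (y ^ 2)⁻¹ :=
    ENNReal.measurable_ofReal.comp ((measurable_id.pow_const 2).inv)
  set G : ℝ → C(T, ℝ) → ℝ≥0∞ := fun y f =>
    B.indicator 1 y * (A.indicator 1 ((y / f t) • f) * ENNReal.ofReal (f t)
      * ENNReal.ofReal (y ^ 2)⁻¹) with hGdef
  have hGm : Measurable (Function.uncurry G) := by
    apply Measurable.mul (hindB.comp measurable_fst)
    apply Measurable.mul
    apply Measurable.mul
    · exact hindA.comp (hsm.comp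
        ((measurable_fst.div (hev.comp measurable_snd)).prodMk measurable_snd))
    · exact ENNReal.measurable_ofReal.comp (hev.comp measurable_snd)
    · exact hw.comp measurable_fst
  set H : C(T, ℝ) → ℝ → ℝ≥0∞ := fun f r =>
    A.indicator 1 (r • f) * B.indicator 1 (r * f t) * ENNReal.ofReal (r ^ 2)⁻¹ with hHdef
  have hHm : Measurable (Function.uncurry H) := by
    apply Measurable.mul
    apply Measurable.mul
    · exact hindA.comp (hsm.comp (measurable_snd.prodMk measurable_fst))
    · exact hindB.comp (measurable_snd.mul (hev.comp measurable_fst))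
    · exact hw.comp measurable_snd
  have hPtm : Measurable fun y => Pt y A := by
    have heq : (fun y => Pt y A) = fun y =>
        ∫⁻ f, (fun p : ℝ × C(T, ℝ) =>
          A.indicator 1 ((p.1 / p.2 t) • p.2) * ENNReal.ofReal (p.2 t)) (y, f) ∂σ := by
      funext y; rw [hPt]
    rw [heq]
    exact Measurable.lintegral_prod_right'
      ((hindA.comp (hsm.comp
        ((measurable_fst.div (hev.comp measurable_snd)).prodMk measurable_snd))).mul
        (ENNReal.measurable_ofReal.comp (hev.comp measurable_snd)))
  -- Step 1: LHS as integral over Ioi 0 of G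
  have step1 : ∫⁻ y in B, Pt y A
      ∂((volume.restrict (Set.Ioi (0 : ℝ))).withDensity fun y => ENNReal.ofReal (y ^ 2)⁻¹)
      = ∫⁻ y in Set.Ioi (0:ℝ), ∫⁻ f, G y f ∂σ := by
    rw [MeasureTheory.restrict_withDensity hB, Measure.restrict_restrict hB,
      Set.inter_eq_self_of_subset_left hBsub,
      lintegral_withDensity_eq_lintegral_mul _ hw hPtm]
    have hexp : ∀ y, ∫⁻ f, G y f ∂σ
        = B.indicator 1 y * (ENNReal.ofReal (y ^ 2)⁻¹ * Pt y A) := by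
      intro y
      rw [hGdef, hPt]
      simp only
      rw [lintegral_const_mul' _ _ (hBne y), lintegral_mul_const' _ _ ofReal_ne_top]
      ring
    have key : ∀ y, (Set.Ioi (0:ℝ)).indicator
        (fun y => ∫⁻ f, G y f ∂σ) y
        = B.indicator (fun y => ((fun y : ℝ => ENNReal.ofReal (y ^ 2)⁻¹) * fun y => Pt y A) y) y := by
      intro y
      by_cases hy : y ∈ B
      · rw [Set.indicator_of_mem (hBsub hy), Set.indicator_of_mem hy, hexp,
          Set.indicator_of_mem hy]
        simp [Pi.mul_apply]
      · rw [Set.indicator_of_notMem hy]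
        by_cases hy' : y ∈ Set.Ioi (0:ℝ)
        · rw [Set.indicator_of_mem hy', hexp, Set.indicator_of_notMem hy, zero_mul]
        · rw [Set.indicator_of_notMem hy']
    rw [← lintegral_indicator hB, ← lintegral_indicator measurableSet_Ioi]
    exact (lintegral_congr key).symm
  -- Step 2: swap
  have step2 : ∫⁻ y in Set.Ioi (0:ℝ), ∫⁻ f, G y f ∂σ
      = ∫⁻ f, (∫⁻ y in Set.Ioi (0:ℝ), G y f) ∂σ :=
    lintegral_lintegral_swap hGm.aemeasurable
  -- Step 3: a.e. change of variables
  have hft : ∀ᵐ f ∂σ, 0 < f t := by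
    have h1 : ∀ᵐ f ∂σ, f t ≠ 0 := by
      rw [ae_iff]; simpa using hσt
    filter_upwards [hσ0, h1] with f hf hne
    exact lt_of_le_of_ne (hf.1 t) (Ne.symm hne)
  have step3 : ∫⁻ f, (∫⁻ y in Set.Ioi (0:ℝ), G y f) ∂σ
      = ∫⁻ f, (∫⁻ r in Set.Ioi (0:ℝ), H f r) ∂σ := by
    apply lintegral_congr_ae
    filter_upwards [hft] with f hf
    have hgm : Measurable fun y => G y f :=
      hGm.comp (measurable_id.prodMk measurable_const)
    rw [scale_lintegral (f t) hf hgm, ← lintegral_const_mul' _ _ ofReal_ne_top]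
    apply setLIntegral_congr_fun measurableSet_Ioi
    intro r hr
    have hr0 : (0:ℝ) < r := hr
    have hcr : f t * r / f t = r := mul_div_cancel_left₀ r hf.ne'
    rw [hGdef, hHdef]
    simp only [hcr]
    have hc2 : ENNReal.ofReal (f t) * (ENNReal.ofReal (f t)
          * ENNReal.ofReal ((f t * r) ^ 2)⁻¹)
        = ENNReal.ofReal (r ^ 2)⁻¹ := by
      rw [← ENNReal.ofReal_mul (by positivity), ← ENNReal.ofReal_mul hf.le]
      congr 1
      field_simp
    calc ENNReal.ofReal (f t) * (B.indicator 1 (f t * r) *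
          (A.indicator 1 (r • f) * ENNReal.ofReal (f t) * ENNReal.ofReal ((f t * r) ^ 2)⁻¹))
        = A.indicator 1 (r • f) * B.indicator 1 (f t * r) *
          (ENNReal.ofReal (f t) * (ENNReal.ofReal (f t)
            * ENNReal.ofReal ((f t * r) ^ 2)⁻¹)) := by ring
      _ = A.indicator 1 (r • f) * B.indicator 1 (r * f t) * ENNReal.ofReal (r ^ 2)⁻¹ := by
          rw [hc2, mul_comm (f t) r]
  -- Step 4: swap back
  have step4 : ∫⁻ f, (∫⁻ r in Set.Ioi (0:ℝ), H f r) ∂σ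
      = ∫⁻ r in Set.Ioi (0:ℝ), ∫⁻ f, H f r ∂σ :=
    lintegral_lintegral_swap hHm.aemeasurable
  -- Step 5: identify with μ
  have step5 : ∫⁻ r in Set.Ioi (0:ℝ), ∫⁻ f, H f r ∂σ
      = μ (A ∩ {f : C(T, ℝ) | f t ∈ B}) := by
    rw [hμdef (A ∩ {f : C(T, ℝ) | f t ∈ B}) (hA.inter (hev hB))]
    apply setLIntegral_congr_fun measurableSet_Ioi
    intro r _
    have hsmr : Measurable fun f : C(T, ℝ) => r • f :=
      hsm.comp (measurable_const.prodMk measurable_id)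
    have hSm : MeasurableSet {f : C(T, ℝ) | r • f ∈ A ∩ {g : C(T, ℝ) | g t ∈ B}} :=
      hsmr (hA.inter (hev hB))
    beta_reduce
    rw [← lintegral_indicator_one hSm, ← lintegral_mul_const' _ _ ofReal_ne_top]
    apply lintegral_congr
    intro f
    simp only [hHdef]
    by_cases h1 : r • f ∈ A
    · by_cases h2 : r * f t ∈ B
      · have hmem : f ∈ {f : C(T, ℝ) | r • f ∈ A ∩ {g : C(T, ℝ) | g t ∈ B}} := by
          refine ⟨h1, ?_⟩
          simpa [ContinuousMap.smul_apply, smul_eq_mul] using h2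
        rw [Set.indicator_of_mem h1, Set.indicator_of_mem h2, Set.indicator_of_mem hmem]
        simp
      · have hmem : f ∉ {f : C(T, ℝ) | r • f ∈ A ∩ {g : C(T, ℝ) | g t ∈ B}} := by
          intro hmem
          exact h2 (by simpa [ContinuousMap.smul_apply, smul_eq_mul] using hmem.2)
        rw [Set.indicator_of_notMem h2, Set.indicator_of_notMem hmem]
        simp
    · have hmem : f ∉ {f : C(T, ℝ) | r • f ∈ A ∩ {g : C(T, ℝ) | g t ∈ B}} :=
        fun hmem => h1 hmem.1
      rw [Set.indicator_of_notMem h1, Set.indicator_of_notMem hmem]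
      simp
  rw [step1, step2, step3, step4, step5]
end
end
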